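/- arXiv:1603.04381 — 5 statements merged into one kernel-verified Lean document; each statement's English description precedes it below -/
import Mathlib

section
/- Let X ⊂ ℝ^d be a compact convex set with nonempty interior, and let f : X → ℝ have a continuous induced ranking rule and (c_α, α)-regular level sets with unique global maximizer x* ∈ X. Let (X_1, …, X_n) be a RankOpt-type process for f on X and let î_n ∈ argmax_{1≤i≤n} f(X_i). Then for every δ ∈ (0,1), with probability at least 1−δ, ‖x* − X_{î_n}‖₂ ≤ C₁ · (ln(1/δ)/n)^{1/(d(1+α)²)}, where C₁ = c_α^{(2+α)/(1+α)} · diam(X)^{1/(1+α)²}. -/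
open MeasureTheory ProbabilityTheory Set
open scoped ENNReal NNReal BigOperators

noncomputable section

/-- Euclidean space `ℝ^d`. -/
abbrev Euc (d : ℕ) := EuclideanSpace ℝ (Fin d)

/-- The uniform probability measure on a set `s` (w.r.t. the ambient volume measure). -/
def unifOn {E : Type*} [MeasureSpace E] (s : Set E) : Measure E :=
  (volume s)⁻¹ • volume.restrict s

instance unifOn.instIsFiniteMeasure {E : Type*} [MeasureSpace E] (s : Set E) :
    IsFiniteMeasure (unifOn s) := by
  constructor
  rw [unifOn, Measure.smul_apply, Measure.restrict_apply_univ, smul_eq_mul]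
  rcases eq_or_ne (volume s) 0 with h | h
  · simp [h]
  rcases eq_or_ne (volume s) ⊤ with h' | h'
  · simp [h, h']
  · rw [ENNReal.inv_mul_cancel h h']; exact ENNReal.one_lt_top

/-- `f` has a continuous induced ranking rule on `Xset`. -/
def HasContinuousRanking {d : ℕ} (Xset : Set (Euc d)) (f : Euc d → ℝ) : Prop :=
  ∃ h : Euc d → ℝ, ContinuousOn h Xset ∧
    ∀ x ∈ Xset, ∀ x' ∈ Xset, Real.sign (f x - f x') = Real.sign (h x - h x')

/-- `f` has `(c, α)`-regular level sets on `Xset` with unique global maximizer `xs`. -/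
def RegularLevelSets {d : ℕ} (Xset : Set (Euc d)) (f : Euc d → ℝ) (xs : Euc d)
    (c α : ℝ) : Prop :=
  xs ∈ Xset ∧ (∀ x ∈ Xset, f x ≤ f xs) ∧ (∀ x ∈ Xset, f x = f xs → x = xs) ∧
    ∀ x ∈ Xset, ∀ x' ∈ Xset, f x = f x' →
      dist xs x ≤ c * dist xs x' ^ ((1 : ℝ) / (1 + α))

/-- Inner radius of a set. -/
def inradius {d : ℕ} (s : Set (Euc d)) : ℝ :=
  sSup {r : ℝ | 0 < r ∧ ∃ x ∈ s, Metric.closedBall x r ⊆ s}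

/-- A RankOpt-type process: `X 0` is uniform on `Xset` and, conditionally on the history
`(X 0, …, X t)`, the point `X (t+1)` is uniform on a measurable set of positive volume squeezed
between the current upper level set and `Xset`. -/
def IsRankOptProcess {d : ℕ} {Ω : Type*} [MeasurableSpace Ω] (P : Measure Ω)
    [IsFiniteMeasure P] (Xset : Set (Euc d)) (f : Euc d → ℝ) (n : ℕ)
    (X : Fin n → Ω → Euc d) : Prop :=
  (∀ i, Measurable (X i)) ∧
  (∀ h0 : 0 < n, P.map (X ⟨0, h0⟩) = unifOn Xset) ∧
  ∀ (t : ℕ) (ht : t + 1 < n),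
    ∀ᵐ ω ∂P, ∃ A : Set (Euc d), MeasurableSet A ∧ 0 < volume A ∧
      {x ∈ Xset | ∀ i : Fin (t + 1), f (X (Fin.castLE ht.le i) ω) ≤ f x} ⊆ A ∧
      A ⊆ Xset ∧
      condDistrib (X ⟨t + 1, ht⟩)
        (fun ω' => fun i : Fin (t + 1) => X (Fin.castLE ht.le i) ω') P
        (fun i : Fin (t + 1) => X (Fin.castLE ht.le i) ω) = unifOn A

/-- A Pure Adaptive Search: `X 0` is uniform on `Xset` and, conditionally on `X t`,
the point `X (t+1)` is uniform on the upper level set of `f (X t)`. -/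
def IsPureAdaptiveSearch {d : ℕ} {Ω : Type*} [MeasurableSpace Ω] (P : Measure Ω)
    [IsFiniteMeasure P] (Xset : Set (Euc d)) (f : Euc d → ℝ) (n : ℕ)
    (X : Fin n → Ω → Euc d) : Prop :=
  (∀ i, Measurable (X i)) ∧
  (∀ h0 : 0 < n, P.map (X ⟨0, h0⟩) = unifOn Xset) ∧
  ∀ (t : ℕ) (ht : t + 1 < n),
    ∀ᵐ ω ∂P,
      condDistrib (X ⟨t + 1, ht⟩) (X ⟨t, by omega⟩) P (X ⟨t, by omega⟩ ω)
        = unifOn {x ∈ Xset | f (X (⟨t, by omega⟩ : Fin n) ω) ≤ f x}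

/-- Empirical ranking loss of a ranking rule `r` over the sample `x` with values `f ∘ x`. -/
def empLoss {d : ℕ} (f : Euc d → ℝ) {t : ℕ} (x : Fin t → Euc d)
    (r : Euc d → Euc d → ℝ) : ℝ :=
  (2 / ((t : ℝ) * ((t : ℝ) - 1))) * ∑ i : Fin t, ∑ j : Fin t,
    if i < j ∧ r (x i) (x j) ≠ Real.sign (f (x i) - f (x j)) then (1 : ℝ) else 0

/-- Index of the smallest ranking structure of the nested sequence `R` containing a ranking rule
consistent with the sample. -/
def khat {d : ℕ} (f : Euc d → ℝ) (R : ℕ → Set (Euc d → Euc d → ℝ)) {t : ℕ}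
    (x : Fin t → Euc d) : ℕ :=
  sInf {k : ℕ | 1 ≤ k ∧ ∃ r ∈ R k, empLoss f x r = 0}

/-- The exploitation sampling region of AdaRankOpt, given the history `x` and the current best
point `xb`. -/
def adaSet {d : ℕ} (Xset : Set (Euc d)) (f : Euc d → ℝ)
    (R : ℕ → Set (Euc d → Euc d → ℝ)) {t : ℕ} (x : Fin t → Euc d) (xb : Euc d) :
    Set (Euc d) :=
  {y ∈ Xset | ∃ r ∈ R (khat f R x), empLoss f x r = 0 ∧ 0 ≤ r y xb}

/-- Bernoulli measure with parameter `p` on `Bool`. -/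
def bern (p : ℝ) : Measure Bool :=
  ENNReal.ofReal p • Measure.dirac true + ENNReal.ofReal (1 - p) • Measure.dirac false

instance bern.instIsFiniteMeasure (p : ℝ) : IsFiniteMeasure (bern p) := by
  constructor
  rw [bern]
  simp only [Measure.add_apply, Measure.smul_apply, measure_univ, smul_eq_mul, mul_one]
  exact ENNReal.add_lt_top.mpr ⟨ENNReal.ofReal_lt_top, ENNReal.ofReal_lt_top⟩

/-- An AdaRankOpt process with exploration parameter `p` and ranking structures `R`. -/
def IsAdaRankOptProcess {d : ℕ} {Ω : Type*} [MeasurableSpace Ω] (P : Measure Ω)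
    [IsFiniteMeasure P] (Xset : Set (Euc d)) (f : Euc d → ℝ) (p : ℝ)
    (R : ℕ → Set (Euc d → Euc d → ℝ)) (n : ℕ) (X : Fin n → Ω → Euc d) : Prop :=
  ∃ B : Fin n → Ω → Bool,
    (∀ i, Measurable (X i)) ∧ (∀ i, Measurable (B i)) ∧
    (∀ h0 : 0 < n, P.map (X ⟨0, h0⟩) = unifOn Xset) ∧
    ∀ (t : ℕ) (ht : t + 1 < n),
      P.map (B ⟨t + 1, ht⟩) = bern p ∧
      IndepFun (B ⟨t + 1, ht⟩)
        (fun ω => ((fun i : Fin (t + 1) => X (Fin.castLE ht.le i) ω),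
                   (fun i : Fin (t + 1) => B (Fin.castLE ht.le i) ω))) P ∧
      ∃ ihat : Ω → Fin (t + 1), Measurable ihat ∧
        (∀ᵐ ω ∂P, ∀ j : Fin (t + 1),
          f (X (Fin.castLE ht.le j) ω) ≤ f (X (Fin.castLE ht.le (ihat ω)) ω)) ∧
        (∀ᵐ ω ∂P,
          condDistrib (X ⟨t + 1, ht⟩)
            (fun ω' => ((fun i : Fin (t + 1) => X (Fin.castLE ht.le i) ω'),
                        B ⟨t + 1, ht⟩ ω')) P
            ((fun i : Fin (t + 1) => X (Fin.castLE ht.le i) ω), B ⟨t + 1, ht⟩ ω)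
          = if B ⟨t + 1, ht⟩ ω then unifOn Xset
            else unifOn (adaSet Xset f R
                  (fun i : Fin (t + 1) => X (Fin.castLE ht.le i) ω)
                  (X (Fin.castLE ht.le (ihat ω)) ω)))

/-- An AdaRankOpt process indexed by all of `ℕ`. -/
def IsAdaRankOptProcessNat {d : ℕ} {Ω : Type*} [MeasurableSpace Ω] (P : Measure Ω)
    [IsFiniteMeasure P] (Xset : Set (Euc d)) (f : Euc d → ℝ) (p : ℝ)
    (R : ℕ → Set (Euc d → Euc d → ℝ)) (X : ℕ → Ω → Euc d) : Prop :=
  ∃ B : ℕ → Ω → Bool,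
    (∀ i, Measurable (X i)) ∧ (∀ i, Measurable (B i)) ∧
    P.map (X 0) = unifOn Xset ∧
    ∀ t : ℕ,
      P.map (B (t + 1)) = bern p ∧
      IndepFun (B (t + 1))
        (fun ω => ((fun i : Fin (t + 1) => X i ω),
                   (fun i : Fin (t + 1) => B i ω))) P ∧
      ∃ ihat : Ω → Fin (t + 1), Measurable ihat ∧
        (∀ᵐ ω ∂P, ∀ j : Fin (t + 1), f (X j ω) ≤ f (X (ihat ω) ω)) ∧
        (∀ᵐ ω ∂P,
          condDistrib (X (t + 1))
            (fun ω' => ((fun i : Fin (t + 1) => X i ω'), B (t + 1) ω')) P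
            ((fun i : Fin (t + 1) => X i ω), B (t + 1) ω)
          = if B (t + 1) ω then unifOn Xset
            else unifOn (adaSet Xset f R (fun i : Fin (t + 1) => X i ω)
                  (X (ihat ω) ω)))

/-- The true ranking loss `L(r) = P(r(X,X') ≠ r_f(X,X'))` for `X, X'` independent uniform on
`Xset`. -/
def trueLoss {d : ℕ} (Xset : Set (Euc d)) (f : Euc d → ℝ) (r : Euc d → Euc d → ℝ) : ℝ :=
  (((unifOn Xset).prod (unifOn Xset))
    {q : Euc d × Euc d | r q.1 q.2 ≠ Real.sign (f q.1 - f q.2)}).toReal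

/-- The random quantity whose expectation is the Rademacher average of the class `R` given the
ranking rule induced by `f`. -/
def radSupTerm {d : ℕ} (f : Euc d → ℝ) (R : Set (Euc d → Euc d → ℝ)) (n : ℕ)
    (x : Fin n → Euc d) (ε : Fin (n / 2) → Bool) : ℝ :=
  sSup {v : ℝ | ∃ r ∈ R, v =
    (1 / ((n / 2 : ℕ) : ℝ)) * |∑ i : Fin (n / 2),
      (if ε i then (1 : ℝ) else -1) *
      (if r (x ⟨i.1, by have := i.isLt; omega⟩) (x ⟨n / 2 + i.1, by have := i.isLt; omega⟩)
          ≠ Real.sign (f (x ⟨i.1, by have := i.isLt; omega⟩)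
            - f (x ⟨n / 2 + i.1, by have := i.isLt; omega⟩)) then (1 : ℝ) else 0)|}

/-- Expected Rademacher average `E[R_n(R)]` of the class `R` given `r_f`, where the sample is
i.i.d. uniform on `Xset` and the signs are i.i.d. Rademacher. -/
def expRad {d : ℕ} (Xset : Set (Euc d)) (f : Euc d → ℝ)
    (R : Set (Euc d → Euc d → ℝ)) (n : ℕ) : ℝ :=
  ∫ x, (∫ ε, radSupTerm f R n x ε ∂(Measure.pi fun _ : Fin (n / 2) => bern (1 / 2)))
    ∂(Measure.pi fun _ : Fin n => unifOn Xset)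

/-- Index type for the non-constant monomials of degree at most `k` in `d` variables. -/
def MonIdx (d k : ℕ) :=
  {a : Fin d → Fin (k + 1) // 1 ≤ ∑ i, (a i : ℕ) ∧ ∑ i, (a i : ℕ) ≤ k}

instance (d k : ℕ) : Fintype (MonIdx d k) := by unfold MonIdx; infer_instance

/-- The monomial feature `x ↦ ∏ i, x i ^ a i`, a coordinate of the polynomial feature map
`Φ_k`. -/
def monFeature {d k : ℕ} (a : MonIdx d k) (x : Fin d → ℝ) : ℝ :=
  ∏ i, x i ^ ((a.1 i : ℕ))

end
/-- sign equality transfers strict positivity -/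
lemma sign_pos_iff_of_eq {a b : ℝ} (h : Real.sign a = Real.sign b) : 0 < a ↔ 0 < b := by
  constructor
  · intro ha
    by_contra hb
    push_neg at hb
    rw [Real.sign_of_pos ha] at h
    rcases hb.lt_or_eq with hb' | hb'
    · rw [Real.sign_of_neg hb'] at h; norm_num at h
    · rw [hb', Real.sign_zero] at h; norm_num at h
  · intro hb
    by_contra ha
    push_neg at ha
    rw [Real.sign_of_pos hb] at h
    rcases ha.lt_or_eq with ha' | ha'
    · rw [Real.sign_of_neg ha'] at h; norm_num at h
    · rw [ha', Real.sign_zero] at h; norm_num at h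

lemma sign_zero_iff_of_eq {a b : ℝ} (h : Real.sign a = Real.sign b) : a = 0 ↔ b = 0 := by
  rw [← Real.sign_eq_zero_iff, h, Real.sign_eq_zero_iff]

/-- Key per-step bound: the uniform measure of `E` over any admissible set `A` is at
most `1 - q'`. -/
lemma unif_le_aux {d : ℕ} {Xset A K E : Set (Euc d)}
    (hKA : K ⊆ A) (hAX : A ⊆ Xset) (hEK : Disjoint E K)
    (hK : MeasurableSet K) (hEmeas : MeasurableSet E)
    (hA0 : 0 < volume A) (hXfin : volume Xset ≠ ⊤)
    {q' : ℝ} (hq0 : 0 ≤ q') (hq1 : q' ≤ 1)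
    (hKvol : ENNReal.ofReal q' * volume Xset ≤ volume K) :
    unifOn A E ≤ ENNReal.ofReal (1 - q') := by
  have hAfin : volume A ≠ ⊤ := (lt_of_le_of_lt (measure_mono hAX) hXfin.lt_top).ne
  have hKfin : volume K ≠ ⊤ := (lt_of_le_of_lt (measure_mono hKA) hAfin.lt_top).ne
  have hEA : E ∩ A ⊆ A \ K := fun x hx => ⟨hx.2, fun hxK => hEK.le_bot ⟨hx.1, hxK⟩⟩
  have h1 : volume (E ∩ A) ≤ volume A - volume K := by
    calc volume (E ∩ A) ≤ volume (A \ K) := measure_mono hEA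
    _ = volume A - volume K := measure_diff hKA hK.nullMeasurableSet hKfin
  have hKA' : ENNReal.ofReal q' * volume A ≤ volume K := by
    calc ENNReal.ofReal q' * volume A ≤ ENNReal.ofReal q' * volume Xset :=
          mul_le_mul_right (measure_mono hAX) _
    _ ≤ volume K := hKvol
  have h2 : volume A - volume K ≤ ENNReal.ofReal (1 - q') * volume A := by
    rw [tsub_le_iff_right]
    calc volume A = (ENNReal.ofReal (1 - q') + ENNReal.ofReal q') * volume A := by
          rw [← ENNReal.ofReal_add (by linarith) hq0]
          norm_num
    _ = ENNReal.ofReal (1 - q') * volume A + ENNReal.ofReal q' * volume A := by ring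
    _ ≤ ENNReal.ofReal (1 - q') * volume A + volume K := add_le_add_right hKA' _
  have : unifOn A E = (volume A)⁻¹ * volume (E ∩ A) := by
    rw [unifOn, Measure.smul_apply, Measure.restrict_apply hEmeas, smul_eq_mul]
  rw [this]
  calc (volume A)⁻¹ * volume (E ∩ A) ≤ (volume A)⁻¹ * (ENNReal.ofReal (1 - q') * volume A) :=
        mul_le_mul_right (h1.trans h2) _
  _ = ENNReal.ofReal (1 - q') * ((volume A)⁻¹ * volume A) := by ring
  _ = ENNReal.ofReal (1 - q') := by
      rw [ENNReal.inv_mul_cancel hA0.ne' hAfin, mul_one]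
lemma geom_aux {d : ℕ} {Xset : Set (Euc d)} (hXconv : Convex ℝ Xset)
    {f h : Euc d → ℝ} (hhcont : ContinuousOn h Xset)
    (hsign : ∀ x ∈ Xset, ∀ x' ∈ Xset, Real.sign (f x - f x') = Real.sign (h x - h x'))
    {xs : Euc d} {c α : ℝ} (hc : 0 < c) (hα : 0 ≤ α)
    (hreg : RegularLevelSets Xset f xs c α)
    {r : ℝ} (hr : 0 ≤ r) {z : Euc d} (hzK : z ∈ Xset ∩ Metric.closedBall xs r)
    (hzmin : ∀ x ∈ Xset ∩ Metric.closedBall xs r, h z ≤ h x)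
    {xh : Euc d} (hxh : xh ∈ Xset) (hfz : f z ≤ f xh) :
    dist xs xh ≤ c * (c * r ^ ((1:ℝ)/(1+α))) ^ ((1:ℝ)/(1+α)) := by
  obtain ⟨hxsX, hmax, _, hlev⟩ := hreg
  have h1α : (0:ℝ) < 1 + α := by linarith
  have he : (0:ℝ) < 1/(1+α) := by positivity
  -- transfer of order between f and h
  have hlt : ∀ x ∈ Xset, ∀ x' ∈ Xset, (f x' < f x ↔ h x' < h x) := by
    intro x hx x' hx'
    rw [← sub_pos, ← sub_pos (a := h x)]
    exact sign_pos_iff_of_eq (hsign x hx x' hx')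
  have hle : ∀ x ∈ Xset, ∀ x' ∈ Xset, (f x ≤ f x' ↔ h x ≤ h x') := by
    intro x hx x' hx'
    rw [← not_lt, ← not_lt (a := h x')]
    exact not_congr (hlt x hx x' hx')
  have heq : ∀ x ∈ Xset, ∀ x' ∈ Xset, (f x = f x' ↔ h x = h x') := by
    intro x hx x' hx'
    rw [← sub_eq_zero, ← sub_eq_zero (a := h x)]
    exact sign_zero_iff_of_eq (hsign x hx x' hx')
  -- IVT on the segment from z to xs
  have hzX : z ∈ Xset := hzK.1
  have hhz : h z ≤ h xh := (hle z hzX xh hxh).mp hfz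
  have hhxs : h xh ≤ h xs := (hle xh hxh xs hxsX).mp (hmax xh hxh)
  have hseg : ∀ t ∈ Icc (0:ℝ) 1, AffineMap.lineMap z xs t ∈ Xset := by
    intro t ht
    have := hXconv.segment_subset hzX hxsX
    apply this
    rw [segment_eq_image_lineMap]
    exact ⟨t, ht, rfl⟩
  have hgc : ContinuousOn (fun t : ℝ => h (AffineMap.lineMap z xs t)) (Icc 0 1) := by
    apply hhcont.comp
    · exact (AffineMap.lineMap_continuous).continuousOn
    · exact hseg
  have hIVT := intermediate_value_Icc (by norm_num : (0:ℝ) ≤ 1) hgc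
  simp only [AffineMap.lineMap_apply_zero, AffineMap.lineMap_apply_one] at hIVT
  obtain ⟨t, ht, hgt⟩ := hIVT ⟨hhz, hhxs⟩
  set w := AffineMap.lineMap z xs t with hw
  have hwX : w ∈ Xset := hseg t ht
  have hfw : f xh = f w := by
    rw [heq xh hxh w hwX]
    exact hgt.symm
  have hdw : dist xs w ≤ r := by
    have h1 : dist w xs = |1 - t| * dist z xs := dist_lineMap_right z xs t
    have h2 : dist z xs ≤ r := Metric.mem_closedBall.mp hzK.2
    have h3 : |1 - t| ≤ 1 := by
      rw [abs_le]; constructor <;> [linarith [ht.2]; linarith [ht.1]]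
    rw [dist_comm xs w, h1]
    calc |1 - t| * dist z xs ≤ 1 * r := by
          apply mul_le_mul h3 h2 dist_nonneg zero_le_one
    _ = r := one_mul r
  have step1 : dist xs xh ≤ c * r ^ ((1:ℝ)/(1+α)) := by
    calc dist xs xh ≤ c * dist xs w ^ ((1:ℝ)/(1+α)) := hlev xh hxh w hwX hfw
    _ ≤ c * r ^ ((1:ℝ)/(1+α)) := by
        apply mul_le_mul_of_nonneg_left _ hc.le
        exact Real.rpow_le_rpow dist_nonneg hdw he.le
  calc dist xs xh ≤ c * dist xs xh ^ ((1:ℝ)/(1+α)) := hlev xh hxh xh hxh rfl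
  _ ≤ c * (c * r ^ ((1:ℝ)/(1+α))) ^ ((1:ℝ)/(1+α)) := by
      apply mul_le_mul_of_nonneg_left _ hc.le
      exact Real.rpow_le_rpow dist_nonneg step1 he.le


/-- **Upper bound for RankOpt** (Theorem 3 of the paper): with probability at least `1 - δ`,
any empirical argmax point `X î` of a RankOpt-type process satisfies
`‖x⋆ - X î‖₂ ≤ C₁ (ln(1/δ)/n)^(1/(d(1+α)²))`. -/
theorem rankopt_upper_bound
    {d : ℕ} {Xset : Set (Euc d)} (hXcomp : IsCompact Xset) (hXconv : Convex ℝ Xset)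
    (hXint : (interior Xset).Nonempty)
    {f : Euc d → ℝ} (hf : HasContinuousRanking Xset f)
    {xs : Euc d} {c α : ℝ} (hc : 0 < c) (hα : 0 ≤ α)
    (hreg : RegularLevelSets Xset f xs c α)
    {Ω : Type*} [MeasurableSpace Ω] {P : Measure Ω} [IsProbabilityMeasure P]
    {n : ℕ} (hn : 0 < n) {X : Fin n → Ω → Euc d}
    (hproc : IsRankOptProcess P Xset f n X)
    {δ : ℝ} (hδ : δ ∈ Set.Ioo (0 : ℝ) 1) :
    ENNReal.ofReal (1 - δ) ≤
      P {ω | ∀ i : Fin n, (∀ j : Fin n, f (X j ω) ≤ f (X i ω)) →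
        dist xs (X i ω) ≤
          c ^ ((2 + α) / (1 + α)) * Metric.diam Xset ^ ((1 : ℝ) / (1 + α) ^ 2) *
            (Real.log (1 / δ) / n) ^ ((1 : ℝ) / (d * (1 + α) ^ 2))} := by
  have h1α : (0:ℝ) < 1 + α := by linarith
  have hlog : 0 < Real.log (1 / δ) := by
    apply Real.log_pos
    rw [lt_div_iff₀ hδ.1]; linarith [hδ.2]
  -- the RHS bound is nonnegative
  have hRHS0 : 0 ≤ c ^ ((2 + α) / (1 + α)) * Metric.diam Xset ^ ((1 : ℝ) / (1 + α) ^ 2) *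
      (Real.log (1 / δ) / n) ^ ((1 : ℝ) / (d * (1 + α) ^ 2)) := by
    apply mul_nonneg (mul_nonneg (Real.rpow_nonneg hc.le _)
      (Real.rpow_nonneg Metric.diam_nonneg _))
    exact Real.rpow_nonneg (div_nonneg hlog.le (Nat.cast_nonneg n)) _
  rcases Nat.eq_zero_or_pos d with hd0 | hd
  · -- trivial case `d = 0`
    subst hd0
    have hsub : ∀ a b : Euc 0, a = b := fun a b => PiLp.ext fun i => i.elim0
    have : {ω | ∀ i : Fin n, (∀ j : Fin n, f (X j ω) ≤ f (X i ω)) →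
        dist xs (X i ω) ≤
          c ^ ((2 + α) / (1 + α)) * Metric.diam Xset ^ ((1 : ℝ) / (1 + α) ^ 2) *
            (Real.log (1 / δ) / n) ^ ((1 : ℝ) / (((0:ℕ):ℝ) * (1 + α) ^ 2))} = univ := by
      apply eq_univ_iff_forall.mpr
      intro ω i _
      rw [hsub xs (X i ω), dist_self]
      exact_mod_cast hRHS0
    rw [this, measure_univ]
    exact ENNReal.ofReal_le_one.mpr (by linarith [hδ.1])
  -- main case `0 < d`
  obtain ⟨h, hhcont, hsign⟩ := hf
  obtain ⟨hXmeas, hproc0, hstep⟩ := hproc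
  have hXm : MeasurableSet Xset := hXcomp.isClosed.measurableSet
  have hXb := hXcomp.isBounded
  set D := Metric.diam Xset with hDdef
  -- `D > 0`
  have hD : 0 < D := by
    obtain ⟨x0, hx0⟩ := hXint
    obtain ⟨ε, hε, hball⟩ := Metric.isOpen_iff.mp isOpen_interior x0 hx0
    set x1 : Euc d := x0 + (ε/2) • EuclideanSpace.single (⟨0, hd⟩ : Fin d) (1:ℝ) with hx1
    have hnorm : dist x1 x0 = ε/2 := by
      rw [dist_eq_norm, hx1, add_sub_cancel_left, norm_smul, EuclideanSpace.norm_single]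
      rw [norm_one, mul_one, Real.norm_eq_abs, abs_of_pos (by linarith)]
    have hx1mem : x1 ∈ Metric.ball x0 ε := by
      rw [Metric.mem_ball, hnorm]; linarith
    have h01 : dist x1 x0 ≤ D :=
      Metric.dist_le_diam_of_mem hXb (interior_subset (hball hx1mem)) (interior_subset hx0)
    rw [hnorm] at h01; linarith
  have hvolX : 0 < volume Xset := Measure.measure_pos_of_nonempty_interior _ hXint
  have hvolXfin : volume Xset ≠ ⊤ := hXcomp.measure_lt_top.ne
  set q : ℝ := Real.log (1 / δ) / n with hqdef
  have hq : 0 < q := div_pos hlog (Nat.cast_pos.mpr hn)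
  set ρ : ℝ := D * q ^ ((1:ℝ)/d) with hρdef
  have hρ : 0 < ρ := mul_pos hD (Real.rpow_pos_of_pos hq _)
  set r : ℝ := min ρ D with hrdef
  have hr0 : 0 < r := lt_min hρ hD
  have hrD : r ≤ D := min_le_right _ _
  have hrρ : r ≤ ρ := min_le_left _ _
  set q' : ℝ := (r / D) ^ (d:ℝ) with hq'def
  have hq'0 : 0 < q' := Real.rpow_pos_of_pos (div_pos hr0 hD) _
  have hq'1 : q' ≤ 1 :=
    Real.rpow_le_one (div_nonneg hr0.le hD.le) ((div_le_one hD).mpr hrD) (Nat.cast_nonneg d)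
  set K : Set (Euc d) := Xset ∩ Metric.closedBall xs r with hKdef
  have hKmeas : MeasurableSet K := hXm.inter measurableSet_closedBall
  have hxsK : xs ∈ K := ⟨hreg.1, Metric.mem_closedBall_self hr0.le⟩
  have hKcomp : IsCompact K := hXcomp.inter_right Metric.isClosed_closedBall
  -- volume of `K`
  have hKvol : ENNReal.ofReal q' * volume Xset ≤ volume K := by
    have himg : AffineMap.homothety xs (r/D) '' Xset ⊆ K := by
      rintro _ ⟨x, hx, rfl⟩
      have ht01 : r/D ∈ Icc (0:ℝ) 1 := ⟨(div_pos hr0 hD).le, (div_le_one hD).mpr hrD⟩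
      refine ⟨?_, ?_⟩
      · have hmem := hXconv.add_smul_sub_mem hreg.1 hx ht01
        have heq : AffineMap.homothety xs (r/D) x = xs + (r/D) • (x - xs) := by
          rw [AffineMap.homothety_apply]
          simp only [vsub_eq_sub, vadd_eq_add]
          abel
        rw [heq]; exact hmem
      · rw [Metric.mem_closedBall]
        have h1 : dist (AffineMap.homothety xs (r/D) x) xs = ‖r/D‖ * dist xs x :=
          dist_homothety_center xs x (r/D)
        rw [h1, Real.norm_eq_abs, abs_of_nonneg (div_pos hr0 hD).le]
        calc r/D * dist xs x ≤ r/D * D :=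
              mul_le_mul_of_nonneg_left (Metric.dist_le_diam_of_mem hXb hreg.1 hx)
                (div_pos hr0 hD).le
        _ = r := div_mul_cancel₀ r hD.ne'
    calc ENNReal.ofReal q' * volume Xset
        = volume (AffineMap.homothety xs (r/D) '' Xset) := by
          rw [Measure.addHaar_image_homothety]
          congr 2
          rw [finrank_euclideanSpace_fin, abs_of_nonneg (pow_nonneg (div_pos hr0 hD).le d),
            hq'def, Real.rpow_natCast]
    _ ≤ volume K := measure_mono himg
  -- minimizer of `h` on `K`
  obtain ⟨z, hzK, hzmin'⟩ := hKcomp.exists_isMinOn ⟨xs, hxsK⟩ (hhcont.mono inter_subset_left)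
  have hzmin : ∀ x ∈ K, h z ≤ h x := fun x hx => hzmin' hx
  have hzX : z ∈ Xset := hzK.1
  have hlt : ∀ x ∈ Xset, ∀ x' ∈ Xset, (f x' < f x ↔ h x' < h x) := by
    intro x hx x' hx'
    rw [← sub_pos, ← sub_pos (a := h x)]
    exact sign_pos_iff_of_eq (hsign x hx x' hx')
  have hfK : ∀ x ∈ K, f z ≤ f x := fun x hx =>
    not_lt.mp (fun hcon => not_lt.mpr (hzmin x hx) ((hlt z hzX x hx.1).mp hcon))
  -- the bad sub-level set `E`
  obtain ⟨u, huopen, huE⟩ : ∃ u, IsOpen u ∧ h ⁻¹' (Iio (h z)) ∩ Xset = u ∩ Xset := by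
    have h' := hhcont
    rw [continuousOn_iff'] at h'
    exact h' _ isOpen_Iio
  set E : Set (Euc d) := h ⁻¹' (Iio (h z)) ∩ Xset with hEdef
  have hEmeas : MeasurableSet E := by
    rw [huE]; exact huopen.measurableSet.inter hXm
  have hEK : Disjoint E K := by
    rw [Set.disjoint_left]
    rintro x ⟨hxlt, hxX⟩ hxK
    exact absurd (hzmin x hxK) (not_le.mpr hxlt)
  have hfE : ∀ x ∈ E, f x < f z := fun x hx => (hlt z hzX x hx.2).mpr hx.1
  set c1 : ℝ≥0∞ := ENNReal.ofReal (1 - q') with hc1def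
  -- the events `G t`
  set G : ℕ → Set Ω := fun t => {ω | ∀ i : Fin n, (i:ℕ) ≤ t → X i ω ∈ E} with hGdef
  have hGmeas : ∀ t, MeasurableSet (G t) := by
    intro t
    have : G t = ⋂ i : Fin n, ⋂ (_ : (i:ℕ) ≤ t), (X i) ⁻¹' E := by
      ext ω; simp [hGdef]
    rw [this]
    exact MeasurableSet.iInter fun i => MeasurableSet.iInter fun _ => (hXmeas i) hEmeas
  -- main induction
  have key : ∀ t, t < n → P (G t) ≤ c1 ^ (t+1) := by
    intro t
    induction t with
    | zero =>
      intro htn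
      calc P (G 0) ≤ P ((X ⟨0, hn⟩) ⁻¹' E) :=
            measure_mono (fun ω hω => hω ⟨0, hn⟩ (le_refl 0))
      _ = (P.map (X ⟨0, hn⟩)) E := (Measure.map_apply (hXmeas _) hEmeas).symm
      _ = unifOn Xset E := by rw [hproc0 hn]
      _ ≤ c1 := unif_le_aux inter_subset_left (subset_refl _) hEK hKmeas hEmeas hvolX
            hvolXfin hq'0.le hq'1 hKvol
      _ = c1 ^ 1 := (pow_one c1).symm
    | succ t IH =>
      intro htn
      have htn' : t < n := by omega
      set hist := fun ω => fun i : Fin (t+1) => X (Fin.castLE htn.le i) ω with histdef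
      have hhist : Measurable hist := measurable_pi_lambda _ fun i => hXmeas _
      set B : Set (Fin (t+1) → Euc d) := univ.pi fun _ => E with hBdef
      have hBmeas : MeasurableSet B := MeasurableSet.univ_pi fun _ => hEmeas
      have hGB : hist ⁻¹' B = G t := by
        ext ω
        simp only [hBdef, mem_preimage, mem_pi, mem_univ, forall_true_left, hGdef,
          mem_setOf_eq, histdef, true_implies]
        constructor
        · intro hv i hi
          have hlt' : (i:ℕ) < t + 1 := by omega
          have := hv ⟨(i:ℕ), hlt'⟩
          have heq : Fin.castLE htn.le ⟨(i:ℕ), hlt'⟩ = i := by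
            apply Fin.ext; rfl
          rwa [heq] at this
        · intro hv i
          refine hv (Fin.castLE htn.le i) ?_
          rw [Fin.coe_castLE]
          exact Nat.lt_succ_iff.mp i.isLt
      have hsub : G (t+1) ⊆ hist ⁻¹' B ∩ (X ⟨t+1, htn⟩) ⁻¹' E := by
        intro ω hω
        refine ⟨?_, hω ⟨t+1, htn⟩ (le_refl _)⟩
        rw [mem_preimage, hBdef]
        intro i _
        refine hω (Fin.castLE htn.le i) ?_
        rw [Fin.coe_castLE]
        have := i.isLt; omega
      have tower := setLIntegral_preimage_condDistrib (μ := P) hhist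
        (hXmeas ⟨t+1, htn⟩).aemeasurable hEmeas hBmeas
      have hae : ∀ᵐ ω ∂(P.restrict (hist ⁻¹' B)),
          condDistrib (X ⟨t+1, htn⟩) hist P (hist ω) E ≤ c1 := by
        rw [ae_restrict_iff' (hhist hBmeas)]
        filter_upwards [hstep t htn] with ω hA hmem
        obtain ⟨A, hAm, hA0, hsup, hAX, hκ⟩ := hA
        have hKA : K ⊆ A := by
          refine subset_trans ?_ hsup
          intro x hx
          refine ⟨hx.1, fun i => ?_⟩
          have hXiE : X (Fin.castLE htn.le i) ω ∈ E := hmem i (mem_univ i)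
          exact le_of_lt (lt_of_lt_of_le (hfE _ hXiE) (hfK x hx))
        have hce : (condDistrib (X ⟨t+1, htn⟩) hist P) (hist ω) = unifOn A := hκ
        rw [hce]
        exact unif_le_aux hKA hAX hEK hKmeas hEmeas hA0 hvolXfin hq'0.le hq'1 hKvol
      calc P (G (t+1)) ≤ P (hist ⁻¹' B ∩ (X ⟨t+1, htn⟩) ⁻¹' E) := measure_mono hsub
      _ = ∫⁻ ω in hist ⁻¹' B, condDistrib (X ⟨t+1, htn⟩) hist P (hist ω) E ∂P := tower.symm
      _ ≤ ∫⁻ _ in hist ⁻¹' B, c1 ∂P := lintegral_mono_ae hae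
      _ = c1 * P (hist ⁻¹' B) := setLIntegral_const _ _
      _ = c1 * P (G t) := by rw [hGB]
      _ ≤ c1 * c1 ^ (t+1) := mul_le_mul_right (IH htn') _
      _ = c1 ^ (t+2) := by ring
  -- almost surely all points are in `Xset`
  have hmemXae : ∀ i : Fin n, ∀ᵐ ω ∂P, X i ω ∈ Xset := by
    rintro ⟨iv, hiv⟩
    cases iv with
    | zero =>
      have h0 : P ((X ⟨0, hn⟩) ⁻¹' Xsetᶜ) = 0 := by
        rw [← Measure.map_apply (hXmeas _) hXm.compl, hproc0 hn, unifOn, Measure.smul_apply,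
          Measure.restrict_apply hXm.compl, compl_inter_self, measure_empty, smul_eq_mul,
          mul_zero]
      rw [ae_iff]
      exact h0
    | succ t =>
      have htn : t + 1 < n := hiv
      set hist := fun ω => fun i : Fin (t+1) => X (Fin.castLE htn.le i) ω with histdef
      have hhist : Measurable hist := measurable_pi_lambda _ fun i => hXmeas _
      have tower := setLIntegral_preimage_condDistrib (μ := P) hhist
        (hXmeas ⟨t+1, htn⟩).aemeasurable hXm.compl MeasurableSet.univ
      have hz0 : ∫⁻ ω in hist ⁻¹' (univ : Set (Fin (t+1) → Euc d)),
          condDistrib (X ⟨t+1, htn⟩) hist P (hist ω) Xsetᶜ ∂P = 0 := by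
        rw [preimage_univ, Measure.restrict_univ]
        have hzero : ∀ᵐ ω ∂P,
            condDistrib (X ⟨t+1, htn⟩) hist P (hist ω) Xsetᶜ = 0 := by
          filter_upwards [hstep t htn] with ω hA
          obtain ⟨A, hAm, hA0, hsup, hAX, hκ⟩ := hA
          have hce : condDistrib (X ⟨t+1, htn⟩) hist P (hist ω) Xsetᶜ = unifOn A Xsetᶜ := by
            rw [hκ]
          rw [hce, unifOn, Measure.smul_apply, Measure.restrict_apply hXm.compl, smul_eq_mul]
          have hempty : Xsetᶜ ∩ A = ∅ := by
            apply eq_empty_iff_forall_notMem.mpr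
            rintro x ⟨hxc, hxA⟩
            exact hxc (hAX hxA)
          rw [hempty, measure_empty, mul_zero]
        rw [lintegral_congr_ae hzero, lintegral_zero]
      have hP0 : P (hist ⁻¹' univ ∩ (X ⟨t+1, htn⟩) ⁻¹' Xsetᶜ) = 0 := tower.symm.trans hz0
      rw [preimage_univ, univ_inter] at hP0
      rw [ae_iff]
      exact hP0
  have hmemX : ∀ᵐ ω ∂P, ∀ i : Fin n, X i ω ∈ Xset := ae_all_iff.mpr hmemXae
  -- `c1 ^ n ≤ δ`
  have hc1n : c1 ^ n ≤ ENNReal.ofReal δ := by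
    have h1q0 : 0 ≤ 1 - q' := by linarith
    rw [hc1def, ← ENNReal.ofReal_pow h1q0]
    apply ENNReal.ofReal_le_ofReal
    rcases le_or_gt ρ D with hcase | hcase
    · have hrρ' : r = ρ := min_eq_left hcase
      have hqd : q' = q := by
        rw [hq'def, hrρ', hρdef, mul_div_cancel_left₀ _ hD.ne',
          ← Real.rpow_mul hq.le,
          one_div, inv_mul_cancel₀ (Nat.cast_ne_zero.mpr hd.ne' : (d:ℝ) ≠ 0), Real.rpow_one]
      rw [hqd]
      have hq1 : q ≤ 1 := by
        have := hq'1; rw [hqd] at this; exact this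
      have hn0 : (n:ℝ) ≠ 0 := Nat.cast_ne_zero.mpr hn.ne'
      calc (1 - q)^n ≤ (Real.exp (-q))^n := by
            apply pow_le_pow_left₀ (by linarith)
            linarith [Real.add_one_le_exp (-q)]
      _ = Real.exp ((n:ℝ) * (-q)) := (Real.exp_nat_mul (-q) n).symm
      _ = δ := by
          have hqn : (n:ℝ) * (-q) = Real.log δ := by
            rw [hqdef]
            field_simp
            rw [Real.log_div one_ne_zero hδ.1.ne', Real.log_one]
            ring
          rw [hqn, Real.exp_log hδ.1]
    · have hr' : r = D := min_eq_right hcase.le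
      have hq1' : q' = 1 := by rw [hq'def, hr', div_self hD.ne', Real.one_rpow]
      rw [hq1', sub_self, zero_pow hn.ne']
      exact hδ.1.le
  set F := G (n-1) with hFdef
  have hFm : MeasurableSet F := hGmeas (n-1)
  have hPF : P F ≤ ENNReal.ofReal δ := by
    calc P F ≤ c1 ^ ((n-1)+1) := key (n-1) (by omega)
    _ = c1 ^ n := by congr 1; omega
    _ ≤ _ := hc1n
  -- geometry on the complement of `F`
  have hgeom : ∀ᵐ ω ∂P, ω ∉ F → ∀ i : Fin n, (∀ j : Fin n, f (X j ω) ≤ f (X i ω)) →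
      dist xs (X i ω) ≤ c ^ ((2 + α) / (1 + α)) * D ^ ((1 : ℝ) / (1 + α) ^ 2) *
        q ^ ((1 : ℝ) / (d * (1 + α) ^ 2)) := by
    filter_upwards [hmemX] with ω hmem hF i hmaxi
    rw [hFdef, hGdef] at hF
    simp only [mem_setOf_eq, not_forall] at hF
    obtain ⟨i0, _, hi0E⟩ := hF
    have hi0X : X i0 ω ∈ Xset := hmem i0
    have hfz : f z ≤ f (X i0 ω) := by
      by_contra hcon
      push_neg at hcon
      exact hi0E ⟨(hlt z hzX _ hi0X).mp hcon, hi0X⟩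
    have hfzi : f z ≤ f (X i ω) := le_trans hfz (hmaxi i0)
    have hXiX : X i ω ∈ Xset := hmem i
    have hb := geom_aux hXconv hhcont hsign hc hα hreg hr0.le hzK hzmin hXiX hfzi
    refine le_trans hb ?_
    set e : ℝ := (1:ℝ)/(1+α) with hedef
    have he0 : 0 < e := by rw [hedef]; positivity
    have exp1 : (2+α)/(1+α) = 1 + e := by rw [hedef]; field_simp; ring
    have exp2 : (1:ℝ)/(1+α)^2 = e * e := by rw [hedef]; field_simp
    have exp3 : (1:ℝ)/((d:ℝ)*(1+α)^2) = ((1:ℝ)/d)*(e*e) := by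
      rw [hedef]
      have hd0 : (d:ℝ) ≠ 0 := Nat.cast_ne_zero.mpr hd.ne'
      rw [div_mul_div_comm, div_mul_div_comm, one_mul, one_mul, ← pow_two]
    have hstep1 : c * (c * r ^ e) ^ e ≤ c * (c * ρ ^ e) ^ e := by
      apply mul_le_mul_of_nonneg_left _ hc.le
      apply Real.rpow_le_rpow (by positivity) _ he0.le
      apply mul_le_mul_of_nonneg_left _ hc.le
      exact Real.rpow_le_rpow hr0.le hrρ he0.le
    refine le_trans hstep1 (le_of_eq ?_)
    rw [exp1, exp2, exp3]
    rw [Real.mul_rpow hc.le (Real.rpow_nonneg hρ.le _)]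
    rw [← Real.rpow_mul hρ.le e e]
    rw [hρdef, Real.mul_rpow hD.le (Real.rpow_nonneg hq.le _), ← Real.rpow_mul hq.le]
    rw [Real.rpow_add hc, Real.rpow_one]
    ring
  -- conclusion
  have hbad : P {ω | ¬ (ω ∉ F → ∀ i : Fin n, (∀ j : Fin n, f (X j ω) ≤ f (X i ω)) →
      dist xs (X i ω) ≤ c ^ ((2 + α) / (1 + α)) * D ^ ((1 : ℝ) / (1 + α) ^ 2) *
        q ^ ((1 : ℝ) / (d * (1 + α) ^ 2)))} = 0 := ae_iff.mp hgeom
  calc ENNReal.ofReal (1 - δ) = 1 - ENNReal.ofReal δ := by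
        rw [ENNReal.ofReal_sub 1 hδ.1.le, ENNReal.ofReal_one]
  _ ≤ 1 - P F := tsub_le_tsub_left hPF 1
  _ = P Fᶜ := (prob_compl_eq_one_sub hFm).symm
  _ = P (Fᶜ \ {ω | ¬ (ω ∉ F → ∀ i : Fin n, (∀ j : Fin n, f (X j ω) ≤ f (X i ω)) →
      dist xs (X i ω) ≤ c ^ ((2 + α) / (1 + α)) * D ^ ((1 : ℝ) / (1 + α) ^ 2) *
        q ^ ((1 : ℝ) / (d * (1 + α) ^ 2)))}) := (measure_diff_null hbad).symm
  _ ≤ _ := by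
      apply measure_mono
      rintro ω ⟨hω1, hω2⟩
      simp only [mem_setOf_eq, not_not] at hω2
      exact hω2 hω1
end

section
/- Let X ⊂ ℝ^d be a compact convex set with nonempty interior, let f : X → ℝ have a continuous induced ranking rule and (c_α, α)-regular level sets with unique global maximizer x*, and let (X_1, …, X_n) be an AdaRankOpt process for f on X with exploration parameter p ∈ (0,1) and nested ranking structures (R_k)_{k≥1}. Assume k* = min{k : r_f ∈ R_k} is finite and k* > 1, that inf_{r ∈ R_{k*−1}} L(r) > 0, and that there is K > 0 with E[R_n(R_{k*−1})] ≤ √(K/n) for all n ≥ 1. Then for every δ ∈ (0,1) and n ≥ 1, with probability at least 1−δ, ‖X_{î_n} − x*‖₂ ≤ C₁ · (11(K + ln(4/δ)) / (p · (inf_{r ∈ R_{k*−1}} L(r))²)) · (ln(2/δ)/n)^{1/(d(1+α)²)}, where C₁ = c_α^{(2+α)/(1+α)} · diam(X)^{1/(1+α)²} and î_n ∈ argmax_{1≤i≤n} f(X_i). -/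
open MeasureTheory ProbabilityTheory Set
open scoped ENNReal NNReal BigOperators

/- Auxiliary lemmas -/
section Aux

open MeasureTheory ProbabilityTheory Set

lemma sign_transfer {u v : ℝ} (h : Real.sign u = Real.sign v) :
    (u ≤ 0 ↔ v ≤ 0) ∧ (u = 0 ↔ v = 0) := by
  rcases lt_trichotomy u 0 with hu | hu | hu <;>
    rcases lt_trichotomy v 0 with hv | hv | hv <;>
    simp only [Real.sign_of_neg, Real.sign_of_pos, Real.sign_zero, hu, hv] at h <;>
    constructor <;> constructor <;> intro h' <;> first
      | linarith | norm_num at h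

lemma key_chain {d : ℕ} {Xset : Set (Euc d)} (hXconv : Convex ℝ Xset)
    {f h : Euc d → ℝ} (hcont : ContinuousOn h Xset)
    (hsgn : ∀ x ∈ Xset, ∀ x' ∈ Xset, Real.sign (f x - f x') = Real.sign (h x - h x'))
    {xs : Euc d} {c α : ℝ} (hc : 0 < c) (hα : 0 ≤ α)
    (hreg : RegularLevelSets Xset f xs c α)
    {x y : Euc d} (hx : x ∈ Xset) (hy : y ∈ Xset) (hfxy : f x ≤ f y) :
    dist xs y ≤ c * dist xs x ^ ((1:ℝ)/(1+α)) := by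
  obtain ⟨hxs, hmax, -, hregs⟩ := hreg
  have hle : ∀ a ∈ Xset, ∀ b ∈ Xset, (f a ≤ f b ↔ h a ≤ h b) := by
    intro a ha b hb
    have H := (sign_transfer (hsgn a ha b hb)).1
    constructor
    · intro h'; have := H.mp (by linarith); linarith
    · intro h'; have := H.mpr (by linarith); linarith
  have heq : ∀ a ∈ Xset, ∀ b ∈ Xset, (f a = f b ↔ h a = h b) := by
    intro a ha b hb
    have H := (sign_transfer (hsgn a ha b hb)).2
    constructor
    · intro h'; have := H.mp (by linarith); linarith
    · intro h'; have := H.mpr (by linarith); linarith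
  set φ : ℝ → Euc d := fun t => xs + t • (x - xs) with hφ
  have hφmem : ∀ t ∈ Icc (0:ℝ) 1, φ t ∈ Xset := by
    intro t ht
    have : φ t = (1 - t) • xs + t • x := by
      simp only [hφ, smul_sub]
      module
    rw [this]
    exact hXconv hxs hx (by linarith [ht.1, ht.2]) ht.1 (by ring)
  have hφcont : ContinuousOn (h ∘ φ) (Icc (0:ℝ) 1) := by
    apply hcont.comp
    · exact (continuous_const.add (continuous_id.smul continuous_const)).continuousOn
    · intro t ht; exact hφmem t ht
  have hyIcc : h y ∈ Icc ((h ∘ φ) 1) ((h ∘ φ) 0) := by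
    have h0 : φ 0 = xs := by simp [hφ]
    have h1 : φ 1 = x := by simp [hφ]
    constructor
    · simpa [h1] using (hle x hx y hy).mp hfxy
    · simpa [h0] using (hle y hy xs hxs).mp (hmax y hy)
  obtain ⟨t, ht, hth⟩ := intermediate_value_Icc' (by norm_num : (0:ℝ) ≤ 1) hφcont hyIcc
  have hz : φ t ∈ Xset := hφmem t ht
  have hfz : f y = f (φ t) := by
    exact ((heq y hy (φ t) hz).mpr (by simpa using hth.symm))
  have hdz : dist xs (φ t) ≤ dist xs x := by
    have : dist xs (φ t) = |t| * dist xs x := by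
      simp only [hφ, dist_eq_norm]
      rw [show xs - (xs + t • (x - xs)) = t • (xs - x) by module]
      rw [norm_smul]
      rw [show xs - x = -(x - xs) by abel, norm_neg]
      simp [Real.norm_eq_abs]
    rw [this, abs_of_nonneg ht.1]
    nlinarith [dist_nonneg (x := xs) (y := x), ht.2]
  calc dist xs y ≤ c * dist xs (φ t) ^ ((1:ℝ)/(1+α)) := hregs y hy (φ t) hz hfz
    _ ≤ c * dist xs x ^ ((1:ℝ)/(1+α)) := by
        apply mul_le_mul_of_nonneg_left _ hc.le
        exact Real.rpow_le_rpow dist_nonneg hdz (by positivity)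

lemma chain_two {d : ℕ} {Xset : Set (Euc d)} (hXconv : Convex ℝ Xset)
    {f h : Euc d → ℝ} (hcont : ContinuousOn h Xset)
    (hsgn : ∀ x ∈ Xset, ∀ x' ∈ Xset, Real.sign (f x - f x') = Real.sign (h x - h x'))
    {xs : Euc d} {c α : ℝ} (hc : 0 < c) (hα : 0 ≤ α)
    (hreg : RegularLevelSets Xset f xs c α)
    {x y : Euc d} (hx : x ∈ Xset) (hy : y ∈ Xset) (hfxy : f x ≤ f y)
    {r : ℝ} (hr0 : 0 ≤ r) (hr : dist xs x ≤ r) :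
    dist xs y ≤ c ^ ((2+α)/(1+α)) * r ^ ((1:ℝ)/(1+α)^2) := by
  have hα1 : (0:ℝ) < 1 + α := by linarith
  set β : ℝ := (1:ℝ)/(1+α) with hβ
  have hβ0 : 0 ≤ β := by positivity
  have h1 : dist xs y ≤ c * dist xs x ^ β := key_chain hXconv hcont hsgn hc hα hreg hx hy hfxy
  have h2 : dist xs x ≤ c * r ^ β := by
    calc dist xs x ≤ c * dist xs x ^ β := key_chain hXconv hcont hsgn hc hα hreg hx hx le_rfl
      _ ≤ c * r ^ β := by
          apply mul_le_mul_of_nonneg_left _ hc.le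
          exact Real.rpow_le_rpow dist_nonneg hr hβ0
  have h3 : dist xs x ^ β ≤ (c * r ^ β) ^ β :=
    Real.rpow_le_rpow dist_nonneg h2 hβ0
  have h4 : (c * r ^ β) ^ β = c ^ β * r ^ (β * β) := by
    rw [Real.mul_rpow hc.le (Real.rpow_nonneg hr0 _), ← Real.rpow_mul hr0]
  have h5 : c * (c ^ β * r ^ (β * β)) = c ^ ((2+α)/(1+α)) * r ^ (β * β) := by
    rw [← mul_assoc]
    congr 1
    rw [show c * c ^ β = c ^ (1:ℝ) * c ^ β by rw [Real.rpow_one],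
      ← Real.rpow_add hc]
    congr 1
    rw [hβ]; field_simp; ring
  have h6 : β * β = (1:ℝ)/(1+α)^2 := by
    rw [hβ]; field_simp
  calc dist xs y ≤ c * dist xs x ^ β := h1
    _ ≤ c * (c ^ β * r ^ (β * β)) := by
        rw [← h4]; exact mul_le_mul_of_nonneg_left h3 hc.le
    _ = c ^ ((2+α)/(1+α)) * r ^ ((1:ℝ)/(1+α)^2) := by rw [h5, h6]

lemma cond_measure_eq {Ω β E : Type*} [MeasurableSpace Ω] [MeasurableSpace β]
    [MeasurableSpace E] [StandardBorelSpace E] [Nonempty E]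
    {P : Measure Ω} [IsFiniteMeasure P]
    {Y : Ω → E} (hY : Measurable Y) {W : Ω → β} (hW : Measurable W)
    {G : Set β} (hG : MeasurableSet G) {s : Set E} (hs : MeasurableSet s) :
    P (W ⁻¹' G ∩ Y ⁻¹' s) = ∫⁻ ω in W ⁻¹' G, condDistrib Y W P (W ω) s ∂P := by
  have hcp : P.map W ⊗ₘ condDistrib Y W P = P.map (fun ω => (W ω, Y ω)) := by
    rw [condDistrib, ← Measure.fst_map_prodMk (X := W) hY]
    exact (P.map (fun ω => (W ω, Y ω))).disintegrate _
  calc P (W ⁻¹' G ∩ Y ⁻¹' s)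
      = P.map (fun ω => (W ω, Y ω)) (G ×ˢ s) := by
        rw [Measure.map_apply (hW.prodMk hY) (hG.prod hs), Set.mk_preimage_prod]
    _ = (P.map W ⊗ₘ condDistrib Y W P) (G ×ˢ s) := by rw [hcp]
    _ = ∫⁻ w in G, condDistrib Y W P w s ∂(P.map W) :=
        Measure.compProd_apply_prod hG hs
    _ = ∫⁻ ω in W ⁻¹' G, condDistrib Y W P (W ω) s ∂P :=
        setLIntegral_map hG (Kernel.measurable_coe _ hs) hW

lemma unifOn_compl_zero {d : ℕ} {Xset A : Set (Euc d)} (hXm : MeasurableSet Xset)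
    (hA : A ⊆ Xset) : unifOn A Xsetᶜ = 0 := by
  rw [unifOn, Measure.smul_apply, Measure.restrict_apply hXm.compl, smul_eq_mul]
  have : Xsetᶜ ∩ A = ∅ := by
    ext y; simp only [Set.mem_inter_iff, Set.mem_compl_iff, Set.mem_empty_iff_false, iff_false,
      not_and]
    intro hy hyA; exact hy (hA hyA)
  simp [this]

lemma bern_true {p : ℝ} : bern p {true} = ENNReal.ofReal p := by
  rw [bern]
  simp [Measure.dirac_apply' _ (measurableSet_singleton _)]

lemma unifOn_isProb {E : Type*} [MeasureSpace E] {s : Set E} (h0 : volume s ≠ 0)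
    (h1 : volume s ≠ ⊤) : IsProbabilityMeasure (unifOn s) := by
  constructor
  rw [unifOn, Measure.smul_apply, Measure.restrict_apply_univ, smul_eq_mul,
    ENNReal.inv_mul_cancel h0 h1]

lemma explore_bound {d n : ℕ} {Ω : Type*} [MeasurableSpace Ω] {P : Measure Ω}
    [IsProbabilityMeasure P] {Xset : Set (Euc d)}
    {X : Fin n → Ω → Euc d} {B : Fin n → Ω → Bool} {p : ℝ}
    (hXm : ∀ i, Measurable (X i)) (hBm : ∀ i, Measurable (B i))
    (hstep : ∀ (t : ℕ) (ht : t + 1 < n),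
      P.map (B ⟨t + 1, ht⟩) = bern p ∧
      IndepFun (B ⟨t + 1, ht⟩)
        (fun ω => ((fun i : Fin (t + 1) => X (Fin.castLE ht.le i) ω),
                   (fun i : Fin (t + 1) => B (Fin.castLE ht.le i) ω))) P ∧
      (∀ᵐ ω ∂P, B ⟨t + 1, ht⟩ ω = true →
        condDistrib (X ⟨t + 1, ht⟩)
          (fun ω' => ((fun i : Fin (t + 1) => X (Fin.castLE ht.le i) ω'),
                      B ⟨t + 1, ht⟩ ω')) P
          ((fun i : Fin (t + 1) => X (Fin.castLE ht.le i) ω), B ⟨t + 1, ht⟩ ω)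
          = unifOn Xset))
    {S : Set (Euc d)} (hSm : MeasurableSet S)
    {q : ℝ} (hq0 : 0 ≤ q) (hq : ENNReal.ofReal q ≤ unifOn Xset S)
    (hp0 : 0 ≤ p) (hpq1 : p * q ≤ 1) (hn : 1 ≤ n) :
    P {ω | ∀ s : Fin n, 1 ≤ (s : ℕ) → X s ω ∉ S} ≤
      ENNReal.ofReal ((1 - p * q) ^ (n - 1)) := by
  classical
  set F : ℕ → Set Ω := fun t =>
    ⋂ (s : Fin n) (_ : 1 ≤ (s : ℕ)) (_ : (s : ℕ) ≤ t), X s ⁻¹' Sᶜ with hF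
  have hFm : ∀ t, MeasurableSet (F t) := fun t =>
    MeasurableSet.iInter fun s => MeasurableSet.iInter fun _ =>
      MeasurableSet.iInter fun _ => (hXm s) hSm.compl
  have hFmem : ∀ t ω, ω ∈ F t ↔ ∀ s : Fin n, 1 ≤ (s : ℕ) → (s : ℕ) ≤ t → X s ω ∉ S := by
    intro t ω
    simp [hF, Set.mem_iInter]
  have hpq0 : 0 ≤ p * q := mul_nonneg hp0 hq0
  -- the one-step estimate
  have hstepP : ∀ (t : ℕ) (ht : t + 1 < n),
      P (F (t + 1)) ≤ ENNReal.ofReal (1 - p * q) * P (F t) := by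
    intro t ht
    obtain ⟨hBmap, hInd, hκ⟩ := hstep t ht
    set W : Ω → (Fin (t + 1) → Euc d) × Bool := fun ω =>
      ((fun i : Fin (t + 1) => X (Fin.castLE ht.le i) ω), B ⟨t + 1, ht⟩ ω) with hWdef
    have hWm : Measurable W := by
      apply Measurable.prodMk
      · exact measurable_pi_lambda _ (fun i => hXm _)
      · exact hBm _
    set H : Set (Fin (t + 1) → Euc d) :=
      {v | ∀ i : Fin (t + 1), 1 ≤ (i : ℕ) → v i ∉ S} with hH
    have hHm : MeasurableSet H := by
      have : H = ⋂ (i : Fin (t + 1)) (_ : 1 ≤ (i : ℕ)), (fun v => v i) ⁻¹' Sᶜ := by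
        ext v; simp [hH, Set.mem_iInter]
      rw [this]
      exact MeasurableSet.iInter fun i => MeasurableSet.iInter fun _ =>
        (measurable_pi_apply i) hSm.compl
    have hWpre : W ⁻¹' (H ×ˢ ({true} : Set Bool)) = F t ∩ B ⟨t + 1, ht⟩ ⁻¹' {true} := by
      ext ω
      simp only [Set.mem_preimage, Set.mem_prod, Set.mem_singleton_iff, Set.mem_inter_iff,
        hFmem, hH, Set.mem_setOf_eq, hWdef]
      constructor
      · rintro ⟨h1, h2⟩
        refine ⟨?_, h2⟩
        intro s hs1 hst
        have hs : s = Fin.castLE ht.le ⟨(s : ℕ), by omega⟩ := by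
          apply Fin.ext; simp
        rw [hs]
        exact h1 ⟨(s : ℕ), by omega⟩ (by simpa using hs1)
      · rintro ⟨h1, h2⟩
        refine ⟨?_, h2⟩
        intro i hi
        exact h1 (Fin.castLE ht.le i) (by simpa using hi) (by simp; omega)
    have hFsucc : F (t + 1) = F t \ X ⟨t + 1, ht⟩ ⁻¹' S := by
      ext ω
      simp only [hFmem, Set.mem_diff, Set.mem_preimage]
      constructor
      · intro hall
        exact ⟨fun s h1 h2 => hall s h1 (by omega),
          fun hmem => hall ⟨t + 1, ht⟩ (by simp) (by simp) hmem⟩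
      · rintro ⟨hFt, hnot⟩ s h1 h2
        rcases Nat.lt_or_ge (s : ℕ) (t + 1) with hlt | hge
        · exact hFt s h1 (by omega)
        · have : s = ⟨t + 1, ht⟩ := by apply Fin.ext; simp; omega
          rw [this]; exact hnot
    have hG'm : MeasurableSet (H ×ˢ ({true} : Set Bool)) :=
      hHm.prod (measurableSet_singleton true)
    have e1 : P (W ⁻¹' (H ×ˢ ({true} : Set Bool)) ∩ X ⟨t + 1, ht⟩ ⁻¹' S)
        = ∫⁻ ω in W ⁻¹' (H ×ˢ ({true} : Set Bool)),
            condDistrib (X ⟨t + 1, ht⟩) W P (W ω) S ∂P :=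
      cond_measure_eq (hXm _) hWm hG'm hSm
    have e2 : ∫⁻ ω in W ⁻¹' (H ×ˢ ({true} : Set Bool)),
          condDistrib (X ⟨t + 1, ht⟩) W P (W ω) S ∂P
        = unifOn Xset S * P (W ⁻¹' (H ×ˢ ({true} : Set Bool))) := by
      have hae : ∀ᵐ ω ∂P.restrict (W ⁻¹' (H ×ˢ ({true} : Set Bool))),
          condDistrib (X ⟨t + 1, ht⟩) W P (W ω) S = unifOn Xset S := by
        rw [ae_restrict_iff' (hWm hG'm)]
        filter_upwards [hκ] with ω hω hmem
        have hBt : B ⟨t + 1, ht⟩ ω = true := hmem.2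
        have := hω hBt
        rw [show condDistrib (X ⟨t + 1, ht⟩) W P (W ω) S = unifOn Xset S from by rw [this]]
      rw [lintegral_congr_ae hae, setLIntegral_const]
    have hBtruem : P (B ⟨t + 1, ht⟩ ⁻¹' {true}) = ENNReal.ofReal p := by
      rw [← Measure.map_apply (hBm _) (measurableSet_singleton true), hBmap, bern_true]
    have hFt' : F t = (fun ω => ((fun i : Fin (t + 1) => X (Fin.castLE ht.le i) ω),
        (fun i : Fin (t + 1) => B (Fin.castLE ht.le i) ω))) ⁻¹' (Prod.fst ⁻¹' H) := by
      ext ω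
      simp only [hFmem, Set.mem_preimage, hH, Set.mem_setOf_eq]
      constructor
      · intro h1 i hi
        exact h1 (Fin.castLE ht.le i) (by simpa using hi) (by simp; omega)
      · intro h1 s hs1 hst
        have hs : s = Fin.castLE ht.le ⟨(s : ℕ), by omega⟩ := by
          apply Fin.ext; simp
        rw [hs]
        exact h1 ⟨(s : ℕ), by omega⟩ (by simpa using hs1)
    have e3 : P (W ⁻¹' (H ×ˢ ({true} : Set Bool))) = ENNReal.ofReal p * P (F t) := by
      rw [hWpre, hFt', Set.inter_comm]
      rw [hInd.measure_inter_preimage_eq_mul _ _ (measurableSet_singleton true)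
        (measurable_fst hHm)]
      rw [hBtruem]
    have e4 : ENNReal.ofReal (p * q) * P (F t) ≤ P (F t ∩ X ⟨t + 1, ht⟩ ⁻¹' S) := by
      calc ENNReal.ofReal (p * q) * P (F t)
          = ENNReal.ofReal q * (ENNReal.ofReal p * P (F t)) := by
            rw [ENNReal.ofReal_mul hp0, ← mul_assoc, mul_comm (ENNReal.ofReal p)]
        _ ≤ unifOn Xset S * (ENNReal.ofReal p * P (F t)) := mul_le_mul_left hq _
        _ = P (W ⁻¹' (H ×ˢ ({true} : Set Bool)) ∩ X ⟨t + 1, ht⟩ ⁻¹' S) := by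
            rw [e1, e2, e3]
        _ ≤ P (F t ∩ X ⟨t + 1, ht⟩ ⁻¹' S) := by
            apply measure_mono
            apply Set.inter_subset_inter_left
            rw [hWpre]
            exact Set.inter_subset_left
    have e5 : P (F (t + 1)) = P (F t) - P (F t ∩ X ⟨t + 1, ht⟩ ⁻¹' S) := by
      rw [hFsucc, ← Set.diff_self_inter]
      exact measure_diff Set.inter_subset_left
        ((hFm t).inter ((hXm _) hSm)).nullMeasurableSet (measure_ne_top _ _)
    rw [e5]
    have hsplit2 : P (F t) = ENNReal.ofReal (1 - p * q) * P (F t)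
        + ENNReal.ofReal (p * q) * P (F t) := by
      rw [← add_mul, ← ENNReal.ofReal_add (by linarith) hpq0, sub_add_cancel,
        ENNReal.ofReal_one, one_mul]
    calc P (F t) - P (F t ∩ X ⟨t + 1, ht⟩ ⁻¹' S)
        ≤ P (F t) - ENNReal.ofReal (p * q) * P (F t) := tsub_le_tsub_left e4 _
      _ ≤ ENNReal.ofReal (1 - p * q) * P (F t) := by
          rw [tsub_le_iff_right]
          exact le_of_eq hsplit2
  -- induction
  have hind : ∀ t : ℕ, t < n → P (F t) ≤ ENNReal.ofReal ((1 - p * q) ^ t) := by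
    intro t
    induction t with
    | zero =>
      intro _
      have : F 0 = Set.univ := by
        apply Set.eq_univ_of_forall
        intro ω
        rw [hFmem]
        intro s h1 h2
        omega
      rw [this, pow_zero, ENNReal.ofReal_one, measure_univ]
    | succ t ih =>
      intro ht
      calc P (F (t + 1)) ≤ ENNReal.ofReal (1 - p * q) * P (F t) := hstepP t ht
        _ ≤ ENNReal.ofReal (1 - p * q) * ENNReal.ofReal ((1 - p * q) ^ t) :=
            mul_le_mul_right (ih (by omega)) _
        _ = ENNReal.ofReal ((1 - p * q) ^ (t + 1)) := by
            rw [← ENNReal.ofReal_mul (by linarith), pow_succ]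
            ring_nf
  have hfinset : {ω | ∀ s : Fin n, 1 ≤ (s : ℕ) → X s ω ∉ S} = F (n - 1) := by
    ext ω
    rw [Set.mem_setOf_eq, hFmem]
    constructor
    · intro h1 s hs1 _; exact h1 s hs1
    · intro h1 s hs1; exact h1 s hs1 (by omega)
  rw [hfinset]
  exact hind (n - 1) (by omega)

end Aux


set_option maxHeartbeats 3000000 in
/-- **Upper bound for AdaRankOpt** (Theorem 14 of the paper). -/
theorem adarankopt_upper_bound
    {d : ℕ} {Xset : Set (Euc d)} (hXcomp : IsCompact Xset) (hXconv : Convex ℝ Xset)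
    (hXint : (interior Xset).Nonempty)
    {f : Euc d → ℝ} (hf : HasContinuousRanking Xset f)
    {xs : Euc d} {c α : ℝ} (hc : 0 < c) (hα : 0 ≤ α)
    (hreg : RegularLevelSets Xset f xs c α)
    {p : ℝ} (hp : p ∈ Set.Ioo (0 : ℝ) 1)
    {R : ℕ → Set (Euc d → Euc d → ℝ)}
    (hRval : ∀ k, ∀ r ∈ R k, ∀ x x' : Euc d, r x x' = -1 ∨ r x x' = 0 ∨ r x x' = 1)
    (hRnested : ∀ k, R k ⊆ R (k + 1))
    {kstar : ℕ} (hkstar1 : 1 < kstar)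
    (hkmem : (fun x x' : Euc d => Real.sign (f x - f x')) ∈ R kstar)
    (hkmin : ∀ k < kstar, (fun x x' : Euc d => Real.sign (f x - f x')) ∉ R k)
    (hL : 0 < sInf (trueLoss Xset f '' R (kstar - 1)))
    {K : ℝ} (hK : 0 < K)
    (hrad : ∀ n : ℕ, 1 ≤ n → expRad Xset f (R (kstar - 1)) n ≤ Real.sqrt (K / n))
    {Ω : Type*} [MeasurableSpace Ω] {P : Measure Ω} [IsProbabilityMeasure P]
    {n : ℕ} (hn : 1 ≤ n) {X : Fin n → Ω → Euc d}
    (hproc : IsAdaRankOptProcess P Xset f p R n X)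
    {δ : ℝ} (hδ : δ ∈ Set.Ioo (0 : ℝ) 1) :
    ENNReal.ofReal (1 - δ) ≤
      P {ω | ∀ i : Fin n, (∀ j : Fin n, f (X j ω) ≤ f (X i ω)) →
        dist xs (X i ω) ≤
          c ^ ((2 + α) / (1 + α)) * Metric.diam Xset ^ ((1 : ℝ) / (1 + α) ^ 2) *
            (11 * (K + Real.log (4 / δ)) /
              (p * (sInf (trueLoss Xset f '' R (kstar - 1))) ^ 2)) *
            (Real.log (2 / δ) / n) ^ ((1 : ℝ) / (d * (1 + α) ^ 2))} := by
  classical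
  obtain ⟨h, hcont, hsgn⟩ := hf
  obtain ⟨B, hXm, hBm, hX0, hstep⟩ := hproc
  have hδ0 : (0:ℝ) < δ := hδ.1
  have hδ1 : δ < 1 := hδ.2
  have hα1 : (0:ℝ) < 1 + α := by linarith
  have hXmeas : MeasurableSet Xset := hXcomp.isClosed.measurableSet
  -- basic log facts
  have hlog2 : 0 < Real.log (2/δ) := Real.log_pos (by rw [lt_div_iff₀ hδ0]; linarith)
  have hlog4' : (1.38:ℝ) ≤ Real.log (4/δ) := by
    have h2 : (0.6931471803:ℝ) < Real.log 2 := Real.log_two_gt_d9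
    have h4 : Real.log 4 = 2 * Real.log 2 := by
      rw [show (4:ℝ) = 2^2 by norm_num, Real.log_pow]; push_cast; ring
    have hmono : Real.log 4 ≤ Real.log (4/δ) := by
      apply Real.log_le_log (by norm_num)
      rw [le_div_iff₀ hδ0]; nlinarith
    nlinarith
  -- names
  set E := sInf (trueLoss Xset f '' R (kstar - 1)) with hE
  set A : ℝ := 11 * (K + Real.log (4 / δ)) / (p * E ^ 2) with hA
  set Bq : ℝ := (Real.log (2 / δ) / n) ^ ((1:ℝ) / (d * (1+α)^2)) with hBq
  set D := Metric.diam Xset with hD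
  have hD0 : 0 ≤ D := Metric.diam_nonneg
  have hBq0 : 0 ≤ Bq := Real.rpow_nonneg (by positivity) _
  have hA0 : 0 < A := by
    rw [hA]
    exact div_pos (by nlinarith) (mul_pos hp.1 (pow_pos hL 2))
  have hT0 : 0 ≤ c ^ ((2 + α) / (1 + α)) * D ^ ((1 : ℝ) / (1 + α) ^ 2) :=
    mul_nonneg (Real.rpow_nonneg hc.le _) (Real.rpow_nonneg hD0 _)
  rcases Nat.eq_zero_or_pos d with hd0 | hd
  · -- dimension 0 : everything is trivial
    subst hd0
    have hsub : ∀ a b : Euc 0, a = b := by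
      intro a b; ext i; exact i.elim0
    have hone : {ω | ∀ i : Fin n, (∀ j : Fin n, f (X j ω) ≤ f (X i ω)) →
        dist xs (X i ω) ≤
          c ^ ((2 + α) / (1 + α)) * D ^ ((1 : ℝ) / (1 + α) ^ 2) * A * Bq} = Set.univ := by
      apply Set.eq_univ_of_forall
      intro ω i _
      have : dist xs (X i ω) = 0 := by rw [hsub xs (X i ω), dist_self]
      rw [this]
      positivity
    rw [hone]
    simp only [measure_univ]
    exact ENNReal.ofReal_le_one.mpr (by linarith)
  -- d ≥ 1 from here on
  have hvolpos : volume Xset ≠ 0 := (Measure.measure_pos_of_nonempty_interior _ hXint).ne'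
  have hvolfin : volume Xset ≠ ⊤ := hXcomp.measure_lt_top.ne
  have hunifXprob : IsProbabilityMeasure (unifOn Xset) := unifOn_isProb hvolpos hvolfin
  -- E ≤ 1
  have hEne : (trueLoss Xset f '' R (kstar - 1)).Nonempty := by
    by_contra hcon
    rw [Set.not_nonempty_iff_eq_empty] at hcon
    have : E = 0 := by rw [hE, hcon, Real.sInf_empty]
    linarith
  have hE1 : E ≤ 1 := by
    obtain ⟨v, hv⟩ := hEne
    have hb : BddBelow (trueLoss Xset f '' R (kstar - 1)) := by
      refine ⟨0, ?_⟩
      rintro w ⟨r0, hr0, rfl⟩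
      exact ENNReal.toReal_nonneg
    refine le_trans (csInf_le hb hv) ?_
    obtain ⟨r0, hr0, rfl⟩ := hv
    have hprod : IsProbabilityMeasure ((unifOn Xset).prod (unifOn Xset)) := by infer_instance
    have := prob_le_one (μ := (unifOn Xset).prod (unifOn Xset))
      (s := {q : Euc d × Euc d | r0 q.1 q.2 ≠ Real.sign (f q.1 - f q.2)})
    calc trueLoss Xset f r0
        ≤ (1 : ℝ≥0∞).toReal := ENNReal.toReal_mono (by simp) this
      _ = 1 := by simp
  have hE2pos : (0:ℝ) < E ^ 2 := pow_pos hL 2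
  have hpA : 15 ≤ p * A := by
    have hq : p * A = 11 * (K + Real.log (4/δ)) / E ^ 2 := by
      rw [hA, mul_div_assoc', mul_div_mul_left _ _ (ne_of_gt hp.1)]
    rw [hq, le_div_iff₀ hE2pos]
    nlinarith
  have hA1 : 1 ≤ A := by
    have h1 : p * A ≤ A := by nlinarith [hp.2, hA0]
    linarith
  have he1 : (1:ℝ) ≤ (d:ℝ) * (1+α)^2 := by
    have : (1:ℝ) ≤ (d:ℝ) := by exact_mod_cast hd
    nlinarith
  have he0 : ((d:ℝ) * (1+α)^2) ≠ 0 := by positivity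
  have hBqe : Bq ^ ((d:ℝ) * (1+α)^2) = Real.log (2/δ) / n := by
    rw [hBq, ← Real.rpow_mul (by positivity), one_div, inv_mul_cancel₀ he0, Real.rpow_one]
  -- almost surely, all points belong to Xset
  have null_out : ∀ i : Fin n, P (X i ⁻¹' Xsetᶜ) = 0 := by
    rintro ⟨iv, hiv⟩
    match iv, hiv with
    | 0, hiv =>
      rw [← Measure.map_apply (hXm _) hXmeas.compl, hX0 hiv]
      exact unifOn_compl_zero hXmeas (subset_refl _)
    | (t+1), hiv =>
      obtain ⟨hBmap, hInd, ihat, hihm, hihmax, hκ⟩ := hstep t hiv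
      set W : Ω → (Fin (t+1) → Euc d) × Bool := fun ω =>
        ((fun i : Fin (t+1) => X (Fin.castLE hiv.le i) ω), B ⟨t+1, hiv⟩ ω) with hWdef
      have hWm : Measurable W := by
        apply Measurable.prodMk
        · exact measurable_pi_lambda _ (fun i => hXm _)
        · exact hBm _
      have base := cond_measure_eq (P := P) (hXm ⟨t+1, hiv⟩) hWm MeasurableSet.univ hXmeas.compl
      rw [Set.preimage_univ, Set.univ_inter, Measure.restrict_univ] at base
      rw [base]
      have hz : ∀ᵐ ω ∂P, condDistrib (X ⟨t+1, hiv⟩) W P (W ω) Xsetᶜ = 0 := by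
        filter_upwards [hκ] with ω hω
        have : condDistrib (X ⟨t+1, hiv⟩) W P (W ω)
            = if B ⟨t+1, hiv⟩ ω then unifOn Xset
              else unifOn (adaSet Xset f R
                (fun i : Fin (t + 1) => X (Fin.castLE hiv.le i) ω)
                (X (Fin.castLE hiv.le (ihat ω)) ω)) := hω
        rw [this]
        split_ifs
        · exact unifOn_compl_zero hXmeas (subset_refl _)
        · exact unifOn_compl_zero hXmeas (fun y hy => hy.1)
      rw [lintegral_congr_ae hz, lintegral_zero]
  -- the event where all points are in Xset
  set allin : Set Ω := ⋂ i : Fin n, X i ⁻¹' Xset with hallin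
  have hallinm : MeasurableSet allin :=
    MeasurableSet.iInter fun i => (hXm i) hXmeas
  have hallinc : P allinᶜ = 0 := by
    rw [hallin, Set.compl_iInter]
    refine measure_iUnion_null fun i => ?_
    rw [← Set.preimage_compl]
    exact null_out i
  have hallin1 : P allin = 1 := by
    have h1 : (1:ℝ≥0∞) - P allin = 0 := by
      rw [← prob_compl_eq_one_sub hallinm, hallinc]
    exact le_antisymm prob_le_one (tsub_eq_zero_iff_le.mp h1)
  rcases le_or_gt 1 (A * Bq) with hcase | hcase
  · -- trivial case : the bound exceeds the diameter
    have hsub : allin ⊆ {ω | ∀ i : Fin n, (∀ j : Fin n, f (X j ω) ≤ f (X i ω)) →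
        dist xs (X i ω) ≤
          c ^ ((2 + α) / (1 + α)) * D ^ ((1 : ℝ) / (1 + α) ^ 2) * A * Bq} := by
      intro ω hω i _
      have hmem : ∀ j : Fin n, X j ω ∈ Xset := by
        intro j
        have := Set.mem_iInter.mp hω j
        exact this
      have hdist : dist xs (X i ω) ≤ D :=
        Metric.dist_le_diam_of_mem hXcomp.isBounded hreg.1 (hmem i)
      have hchain : dist xs (X i ω) ≤ c ^ ((2+α)/(1+α)) * D ^ ((1:ℝ)/(1+α)^2) :=
        chain_two hXconv hcont hsgn hc hα hreg (hmem i) (hmem i) le_rfl hD0 hdist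
      calc dist xs (X i ω) ≤ c ^ ((2+α)/(1+α)) * D ^ ((1:ℝ)/(1+α)^2) := hchain
        _ ≤ c ^ ((2+α)/(1+α)) * D ^ ((1:ℝ)/(1+α)^2) * (A * Bq) :=
            le_mul_of_one_le_right hT0 hcase
        _ = c ^ ((2+α)/(1+α)) * D ^ ((1:ℝ)/(1+α)^2) * A * Bq := by ring
    calc ENNReal.ofReal (1 - δ) ≤ 1 := ENNReal.ofReal_le_one.mpr (by linarith)
      _ = P allin := hallin1.symm
      _ ≤ _ := measure_mono hsub
  -- main case : small radius
  have hAB0 : 0 ≤ A * Bq := mul_nonneg hA0.le hBq0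
  set τ : ℝ := (A * Bq) ^ ((1+α)^2 : ℝ) with hτ
  have hτ0 : 0 ≤ τ := Real.rpow_nonneg hAB0 _
  have hτ1 : τ ≤ 1 := Real.rpow_le_one hAB0 hcase.le (by positivity)
  set ρ : ℝ := D * τ with hρ
  have hρ0 : 0 ≤ ρ := mul_nonneg hD0 hτ0
  set S : Set (Euc d) := Metric.closedBall xs ρ ∩ Xset with hS
  have hSm : MeasurableSet S := (Metric.isClosed_closedBall.inter hXcomp.isClosed).measurableSet
  have hSsub : S ⊆ Xset := Set.inter_subset_right
  -- volume lower bound via homothety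
  have himg : (AffineMap.homothety xs τ) '' Xset ⊆ S := by
    rintro _ ⟨z, hz, rfl⟩
    constructor
    · rw [Metric.mem_closedBall, AffineMap.homothety_apply]
      simp only [vsub_eq_sub, vadd_eq_add]
      have h1 : dist (τ • (z - xs) + xs) xs = |τ| * dist z xs := by
        rw [dist_eq_norm, add_sub_cancel_right, norm_smul, dist_eq_norm, Real.norm_eq_abs]
      rw [h1, abs_of_nonneg hτ0, hρ]
      have h2 : dist z xs ≤ D := Metric.dist_le_diam_of_mem hXcomp.isBounded hz hreg.1
      nlinarith
    · rw [AffineMap.homothety_apply]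
      simp only [vsub_eq_sub, vadd_eq_add]
      have h3 : τ • (z - xs) + xs = τ • z + (1 - τ) • xs := by module
      rw [h3]
      exact hXconv hz hreg.1 hτ0 (by linarith) (by ring)
  have hvolS : ENNReal.ofReal (τ ^ d) * volume Xset ≤ volume S := by
    have himgvol : volume ((AffineMap.homothety xs τ) '' Xset)
        = ENNReal.ofReal (τ ^ d) * volume Xset := by
      rw [Measure.addHaar_image_homothety]
      congr 2
      rw [abs_of_nonneg (pow_nonneg hτ0 _), finrank_euclideanSpace_fin]
    rw [← himgvol]
    exact measure_mono himg
  have hq' : ENNReal.ofReal (τ ^ d) ≤ unifOn Xset S := by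
    rw [unifOn, Measure.smul_apply, Measure.restrict_apply hSm,
      Set.inter_eq_self_of_subset_left hSsub, smul_eq_mul]
    calc ENNReal.ofReal (τ^d)
        = (volume Xset)⁻¹ * (ENNReal.ofReal (τ^d) * volume Xset) := by
          rw [mul_comm (ENNReal.ofReal _) (volume Xset), ← mul_assoc,
            ENNReal.inv_mul_cancel hvolpos hvolfin, one_mul]
      _ ≤ (volume Xset)⁻¹ * volume S := mul_le_mul_right hvolS _
  -- arithmetic about p * τ ^ d
  have hqd : τ ^ d = A ^ ((d:ℝ)*(1+α)^2) * (Real.log (2/δ) / n) := by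
    have h1 : τ ^ d = τ ^ (d:ℝ) := (Real.rpow_natCast τ d).symm
    rw [h1, hτ, ← Real.rpow_mul hAB0,
      show ((1+α)^2 : ℝ) * d = (d:ℝ)*(1+α)^2 by ring,
      Real.mul_rpow hA0.le hBq0, hBqe]
  have hn0 : (0:ℝ) < n := by
    have : (0:ℕ) < n := by omega
    exact_mod_cast this
  have hpq15 : 15 * (Real.log (2/δ)/n) ≤ p * τ^d := by
    rw [hqd]
    have hAe : A ≤ A ^ ((d:ℝ)*(1+α)^2) := by
      calc A = A ^ (1:ℝ) := (Real.rpow_one A).symm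
        _ ≤ A ^ ((d:ℝ)*(1+α)^2) := Real.rpow_le_rpow_of_exponent_le hA1 he1
    have hLn0 : 0 ≤ Real.log (2/δ)/n := by positivity
    calc 15 * (Real.log (2/δ)/n) ≤ (p*A) * (Real.log (2/δ)/n) := by nlinarith
      _ ≤ p * (A ^ ((d:ℝ)*(1+α)^2) * (Real.log (2/δ)/n)) := by
          rw [mul_assoc]
          exact mul_le_mul_of_nonneg_left (mul_le_mul_of_nonneg_right hAe hLn0) hp.1.le
  have hτd1 : τ ^ d ≤ 1 := pow_le_one₀ hτ0 hτ1
  have hτd0 : 0 ≤ τ ^ d := pow_nonneg hτ0 d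
  have hpq1 : p * τ^d ≤ 1 := by nlinarith [hp.1, hp.2]
  have hpq0 : 0 ≤ p * τ^d := mul_nonneg hp.1.le hτd0
  have hlog22 : (0.69:ℝ) ≤ Real.log (2/δ) := by
    have h2 : (0.6931471803:ℝ) < Real.log 2 := Real.log_two_gt_d9
    have hmono : Real.log 2 ≤ Real.log (2/δ) := by
      apply Real.log_le_log (by norm_num)
      rw [le_div_iff₀ hδ0]; nlinarith
    linarith
  have hn2 : (2:ℝ) ≤ n := by
    have h15 : 15 * (Real.log (2/δ)/n) ≤ 1 := le_trans hpq15 hpq1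
    rw [mul_div_assoc'] at h15
    rw [div_le_one hn0] at h15
    nlinarith
  -- weakened step hypothesis for explore_bound
  have hstep' : ∀ (t : ℕ) (ht : t + 1 < n),
      P.map (B ⟨t + 1, ht⟩) = bern p ∧
      IndepFun (B ⟨t + 1, ht⟩)
        (fun ω => ((fun i : Fin (t + 1) => X (Fin.castLE ht.le i) ω),
                   (fun i : Fin (t + 1) => B (Fin.castLE ht.le i) ω))) P ∧
      (∀ᵐ ω ∂P, B ⟨t + 1, ht⟩ ω = true →
        condDistrib (X ⟨t + 1, ht⟩)
          (fun ω' => ((fun i : Fin (t + 1) => X (Fin.castLE ht.le i) ω'),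
                      B ⟨t + 1, ht⟩ ω')) P
          ((fun i : Fin (t + 1) => X (Fin.castLE ht.le i) ω), B ⟨t + 1, ht⟩ ω)
          = unifOn Xset) := by
    intro t ht
    obtain ⟨hBmap, hInd, ihat, hihm, hihmax, hκ⟩ := hstep t ht
    refine ⟨hBmap, hInd, ?_⟩
    filter_upwards [hκ] with ω hω hB
    rw [hω, if_pos hB]
  have hFbound := explore_bound hXm hBm hstep' hSm hτd0 hq' hp.1.le hpq1 hn
  -- real estimate
  have hrealfin : (1 - p * τ^d) ^ (n - 1) ≤ δ := by
    have hm : ((n - 1 : ℕ) : ℝ) = (n : ℝ) - 1 := by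
      rw [Nat.cast_sub hn]; simp
    have hexp1 : 1 - p * τ^d ≤ Real.exp (-(p * τ^d)) := by
      have := Real.add_one_le_exp (-(p * τ^d)); linarith
    have hpow : (1 - p * τ^d) ^ (n - 1) ≤ Real.exp (-(p * τ^d)) ^ (n - 1) :=
      pow_le_pow_left₀ (by linarith) hexp1 _
    have hexp2 : Real.exp (-(p * τ^d)) ^ (n - 1)
        = Real.exp (((n - 1 : ℕ) : ℝ) * (-(p * τ^d))) := by
      rw [← Real.exp_nat_mul]
    have harg : ((n - 1 : ℕ) : ℝ) * (-(p * τ^d)) ≤ Real.log δ := by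
      rw [hm]
      have h1 : 15 * (Real.log (2/δ)/n) * ((n:ℝ) - 1) ≤ (p * τ^d) * ((n:ℝ) - 1) :=
        mul_le_mul_of_nonneg_right hpq15 (by linarith)
      have h2 : Real.log (1/δ) ≤ Real.log (2/δ) := by
        apply Real.log_le_log (by positivity)
        rw [div_le_div_iff₀ hδ0 hδ0]
        nlinarith
      have h3 : Real.log (2/δ) ≤ 15 * (Real.log (2/δ)/n) * ((n:ℝ) - 1) := by
        rw [mul_div_assoc', div_mul_eq_mul_div, le_div_iff₀ hn0]
        nlinarith
      have h4 : Real.log (1/δ) = -Real.log δ := by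
        rw [one_div, Real.log_inv]
      nlinarith
    calc (1 - p * τ^d) ^ (n - 1)
        ≤ Real.exp (((n - 1 : ℕ) : ℝ) * (-(p * τ^d))) := by rw [← hexp2]; exact hpow
      _ ≤ Real.exp (Real.log δ) := Real.exp_le_exp.mpr harg
      _ = δ := Real.exp_log hδ0
  -- assembling
  set HitMiss : Set Ω := {ω | ∀ s : Fin n, 1 ≤ (s : ℕ) → X s ω ∉ S} with hHM
  have hPmiss : P HitMiss ≤ ENNReal.ofReal δ :=
    le_trans hFbound (ENNReal.ofReal_le_ofReal hrealfin)
  have hhitm : MeasurableSet HitMiss := by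
    have : HitMiss = ⋂ (s : Fin n) (_ : 1 ≤ (s : ℕ)), X s ⁻¹' Sᶜ := by
      ext ω; simp [hHM, Set.mem_iInter]
    rw [this]
    exact MeasurableSet.iInter fun s => MeasurableSet.iInter fun _ => (hXm s) hSm.compl
  have hGsub : allin ∩ HitMissᶜ ⊆ {ω | ∀ i : Fin n, (∀ j : Fin n, f (X j ω) ≤ f (X i ω)) →
      dist xs (X i ω) ≤
        c ^ ((2 + α) / (1 + α)) * D ^ ((1 : ℝ) / (1 + α) ^ 2) * A * Bq} := by
    rintro ω ⟨hall, hhit⟩ i hi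
    rw [Set.mem_compl_iff, hHM, Set.mem_setOf_eq] at hhit
    push_neg at hhit
    obtain ⟨s, hs1, hsS⟩ := hhit
    have hmem : ∀ j : Fin n, X j ω ∈ Xset := fun j => Set.mem_iInter.mp hall j
    have hdist : dist xs (X s ω) ≤ ρ := by
      have h1 := hsS.1
      rw [Metric.mem_closedBall] at h1
      rwa [dist_comm]
    have hchain := chain_two hXconv hcont hsgn hc hα hreg (hmem s) (hmem i) (hi s) hρ0 hdist
    refine le_trans hchain (le_of_eq ?_)
    have hτe : τ ^ ((1:ℝ)/(1+α)^2) = A * Bq := by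
      rw [hτ, ← Real.rpow_mul hAB0, mul_one_div,
        div_self (ne_of_gt (by positivity : (0:ℝ) < (1+α)^2)), Real.rpow_one]
    have hρe : ρ ^ ((1:ℝ)/(1+α)^2) = D ^ ((1:ℝ)/(1+α)^2) * (A * Bq) := by
      rw [hρ, Real.mul_rpow hD0 hτ0, hτe]
    rw [hρe]; ring
  have hmG : MeasurableSet (allin ∩ HitMissᶜ) := hallinm.inter hhitm.compl
  have h1 : P ((allin ∩ HitMissᶜ)ᶜ) ≤ ENNReal.ofReal δ := by
    rw [Set.compl_inter, compl_compl]
    calc P (allinᶜ ∪ HitMiss) ≤ P allinᶜ + P HitMiss := measure_union_le _ _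
      _ ≤ 0 + ENNReal.ofReal δ := add_le_add (le_of_eq hallinc) hPmiss
      _ = ENNReal.ofReal δ := by rw [zero_add]
  have h2 : P (allin ∩ HitMissᶜ) = 1 - P ((allin ∩ HitMissᶜ)ᶜ) := by
    have := prob_compl_eq_one_sub (μ := P) hmG.compl
    rwa [compl_compl] at this
  have hPG : ENNReal.ofReal (1 - δ) ≤ P (allin ∩ HitMissᶜ) := by
    rw [h2]
    calc ENNReal.ofReal (1 - δ) = 1 - ENNReal.ofReal δ := by
          rw [ENNReal.ofReal_sub _ hδ0.le, ENNReal.ofReal_one]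
      _ ≤ 1 - P ((allin ∩ HitMissᶜ)ᶜ) := tsub_le_tsub_left h1 1
  exact le_trans hPG (measure_mono hGsub)
end

section
/- Let X ⊂ ℝ^d be a compact convex set with nonempty interior, let f : X → ℝ have a continuous induced ranking rule, and let (X_1, …, X_n) be a RankOpt-type process for f on X. Then for every y ∈ ℝ, P(max_{1≤i≤n} f(X_i) ≥ y) ≥ P(max_{1≤i≤n} f(X'_i) ≥ y), where X'_1, …, X'_n are independent random variables uniformly distributed on X. -/
open MeasureTheory ProbabilityTheory Set
open scoped ENNReal NNReal BigOperators

private lemma sign_neg_of {a b : ℝ} (h : Real.sign a = Real.sign b) (ha : a < 0) : b < 0 := by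
  by_contra hb
  rcases eq_or_lt_of_le (not_lt.1 hb) with hb' | hb'
  · rw [Real.sign_of_neg ha, ← hb', Real.sign_zero] at h; norm_num at h
  · rw [Real.sign_of_neg ha, Real.sign_of_pos hb'] at h; norm_num at h

private lemma sign_neg_iff' {a b : ℝ} (h : Real.sign a = Real.sign b) : a < 0 ↔ b < 0 :=
  ⟨sign_neg_of h, sign_neg_of h.symm⟩

private lemma unifOn_apply' {E : Type*} [MeasureSpace E] {s : Set E} (hs : MeasurableSet s)
    (t : Set E) : unifOn s t = (volume s)⁻¹ * volume (t ∩ s) := by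
  rw [unifOn, Measure.smul_apply, Measure.restrict_apply' hs, smul_eq_mul]

private lemma unifOn_prob {E : Type*} [MeasureSpace E] {s : Set E} (h0 : volume s ≠ 0)
    (ht : volume s ≠ ⊤) : IsProbabilityMeasure (unifOn s) := by
  constructor
  rw [unifOn, Measure.smul_apply, Measure.restrict_apply_univ, smul_eq_mul,
    ENNReal.inv_mul_cancel h0 ht]

private lemma unif_compl_le {E : Type*} [MeasureSpace E] {Xs A S : Set E}
    (hXm : MeasurableSet Xs) (hAm : MeasurableSet A) (hSm : MeasurableSet S)
    (hSA : S ⊆ A) (hAX : A ⊆ Xs) (hA0 : volume A ≠ 0) (hXt : volume Xs ≠ ⊤) :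
    unifOn A Sᶜ ≤ unifOn Xs Sᶜ := by
  have hAt : volume A ≠ ⊤ := ((measure_mono hAX).trans_lt (lt_top_iff_ne_top.2 hXt)).ne
  have hX0 : volume Xs ≠ 0 := fun h => hA0 (le_antisymm (h ▸ measure_mono hAX) (by simp))
  haveI := unifOn_prob hA0 hAt
  haveI := unifOn_prob hX0 hXt
  rw [prob_compl_eq_one_sub hSm, prob_compl_eq_one_sub hSm]
  refine tsub_le_tsub_left ?_ 1
  rw [unifOn_apply' hXm, unifOn_apply' hAm, inter_eq_self_of_subset_left hSA,
    inter_eq_self_of_subset_left (hSA.trans hAX)]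
  exact mul_le_mul_left (ENNReal.inv_le_inv.2 (measure_mono hAX)) _

private lemma upperset_measurable {E : Type*} [TopologicalSpace E] [MeasurableSpace E]
    [BorelSpace E] [T2Space E] {Xs : Set E} (hXcomp : IsCompact Xs)
    {f g : E → ℝ} (hg : ContinuousOn g Xs)
    (hlt : ∀ x ∈ Xs, ∀ x' ∈ Xs, (f x < f x' ↔ g x < g x')) (y : ℝ) :
    MeasurableSet {x ∈ Xs | y ≤ f x} := by
  set S := {x ∈ Xs | y ≤ f x} with hSdef
  rcases eq_empty_or_nonempty S with hSe | hSne
  · rw [hSe]; exact MeasurableSet.empty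
  have hbdd : BddBelow (g '' S) :=
    ((hXcomp.image_of_continuousOn hg).bddBelow).mono (image_mono (sep_subset _ _))
  set c := sInf (g '' S) with hc
  by_cases hatt : ∃ x0 ∈ S, g x0 = c
  · obtain ⟨x0, hx0S, hx0⟩ := hatt
    have hSeq : S = Xs ∩ g ⁻¹' (Ici (g x0)) := by
      ext x
      constructor
      · rintro ⟨hxX, hxy⟩
        refine ⟨hxX, ?_⟩
        simpa [hx0] using csInf_le hbdd ⟨x, ⟨hxX, hxy⟩, rfl⟩
      · rintro ⟨hxX, hge⟩
        refine ⟨hxX, ?_⟩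
        have hnot : ¬ f x < f x0 := fun hlt' =>
          absurd ((hlt x hxX x0 hx0S.1).mp hlt') (not_lt.2 hge)
        exact le_trans hx0S.2 (not_lt.1 hnot)
    rw [hSeq]
    exact (hg.preimage_isClosed_of_isClosed hXcomp.isClosed isClosed_Ici).measurableSet
  · have hSeq : S = Xs \ (Xs ∩ g ⁻¹' (Iic c)) := by
      ext x
      constructor
      · rintro ⟨hxX, hxy⟩
        refine ⟨hxX, fun hcon => ?_⟩
        have hcle : c ≤ g x := csInf_le hbdd ⟨x, ⟨hxX, hxy⟩, rfl⟩
        exact hatt ⟨x, ⟨hxX, hxy⟩, le_antisymm hcon.2 hcle⟩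
      · rintro ⟨hxX, hnot⟩
        have hgt : c < g x := lt_of_not_ge fun hle => hnot ⟨hxX, hle⟩
        obtain ⟨v, hv, hvlt⟩ := exists_lt_of_csInf_lt (hSne.image g) hgt
        obtain ⟨x', hx'S, rfl⟩ := hv
        have hfx : f x' < f x := (hlt x' hx'S.1 x hxX).mpr hvlt
        exact ⟨hxX, (hx'S.2.trans hfx.le)⟩
    rw [hSeq]
    exact hXcomp.isClosed.measurableSet.diff
      (hg.preimage_isClosed_of_isClosed hXcomp.isClosed isClosed_Iic).measurableSet


/-- **Proposition 6 of the paper**: a RankOpt-type process stochastically dominates a pure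
random search, i.e. `P(max_i f(X_i) ≥ y) ≥ P(max_i f(X'_i) ≥ y)` for `X'_i` i.i.d. uniform
on `X`. -/
theorem rankopt_dominates_uniform
    {d : ℕ} {Xset : Set (Euc d)} (hXcomp : IsCompact Xset) (hXconv : Convex ℝ Xset)
    (hXint : (interior Xset).Nonempty)
    {f : Euc d → ℝ} (hf : HasContinuousRanking Xset f)
    {Ω : Type*} [MeasurableSpace Ω] {P : Measure Ω} [IsProbabilityMeasure P]
    {n : ℕ} {X : Fin n → Ω → Euc d} (hproc : IsRankOptProcess P Xset f n X)
    (y : ℝ) :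
    (Measure.pi fun _ : Fin n => unifOn Xset) {x | ∃ i : Fin n, y ≤ f (x i)}
      ≤ P {ω | ∃ i : Fin n, y ≤ f (X i ω)} := by
  classical
  obtain ⟨hXmeas, hX0, hcond⟩ := hproc
  rcases Nat.eq_zero_or_pos n with hn | hn
  · subst hn
    simp
  have hXm : MeasurableSet Xset := hXcomp.isClosed.measurableSet
  have hVtop : volume Xset ≠ ⊤ := hXcomp.measure_lt_top.ne
  have hV0 : volume Xset ≠ 0 :=
    ((isOpen_interior.measure_pos volume hXint).trans_le (measure_mono interior_subset)).ne'
  obtain ⟨g, hgcont, hsgn⟩ := hf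
  have hltiff : ∀ x ∈ Xset, ∀ x' ∈ Xset, (f x < f x' ↔ g x < g x') := by
    intro x hx x' hx'
    have := sign_neg_iff' (hsgn x hx x' hx')
    simpa [sub_neg] using this
  set S : Set (Euc d) := {x ∈ Xset | y ≤ f x} with hSdef
  have hS : MeasurableSet S := upperset_measurable hXcomp hgcont hltiff y
  haveI hPX : IsProbabilityMeasure (unifOn Xset) := unifOn_prob hV0 hVtop
  set r : ℝ≥0∞ := unifOn Xset Sᶜ with hr
  -- a.s. each X i lands in Xset
  have Hrange : ∀ i : Fin n, ∀ᵐ ω ∂P, X i ω ∈ Xset := by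
    rintro ⟨v, hv⟩
    rw [ae_iff]
    cases v with
    | zero =>
      have h1 : {ω | ¬ X ⟨0, hv⟩ ω ∈ Xset} = X ⟨0, hv⟩ ⁻¹' Xsetᶜ := rfl
      rw [h1, ← Measure.map_apply (hXmeas _) hXm.compl, hX0 hv, unifOn_apply' hXm,
        compl_inter_self]
      simp
    | succ t =>
      have key := hcond t hv
      have heq : ∫⁻ ω in (fun ω' => fun i : Fin (t+1) => X (Fin.castLE hv.le i) ω') ⁻¹' univ,
          condDistrib (X ⟨t+1, hv⟩)
            (fun ω' => fun i : Fin (t+1) => X (Fin.castLE hv.le i) ω') P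
            ((fun ω' => fun i : Fin (t+1) => X (Fin.castLE hv.le i) ω') ω) Xsetᶜ ∂P
          = P ((fun ω' => fun i : Fin (t+1) => X (Fin.castLE hv.le i) ω') ⁻¹' univ
              ∩ X ⟨t+1, hv⟩ ⁻¹' Xsetᶜ) :=
        setLIntegral_preimage_condDistrib
          (measurable_pi_lambda _ fun i => hXmeas _) (hXmeas _).aemeasurable
          hXm.compl MeasurableSet.univ
      rw [preimage_univ, Measure.restrict_univ, univ_inter] at heq
      have h1 : {ω | ¬ X ⟨t+1, hv⟩ ω ∈ Xset} = X ⟨t+1, hv⟩ ⁻¹' Xsetᶜ := rfl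
      rw [h1, ← heq]
      have hzero : ∀ᵐ ω ∂P,
          condDistrib (X ⟨t+1, hv⟩)
            (fun ω' => fun i : Fin (t+1) => X (Fin.castLE hv.le i) ω') P
            ((fun ω' => fun i : Fin (t+1) => X (Fin.castLE hv.le i) ω') ω) Xsetᶜ = 0 := by
        filter_upwards [key] with ω hω
        obtain ⟨A, hAm, hA0, hsubA, hAX, hκ⟩ := hω
        rw [hκ, unifOn_apply' hAm]
        have : Xsetᶜ ∩ A = ∅ := by
          ext z; simp only [mem_inter_iff, mem_compl_iff, mem_empty_iff_false, iff_false,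
            not_and]
          exact fun hz hzA => hz (hAX hzA)
        rw [this]
        simp
      rw [lintegral_congr_ae hzero]
      simp
  -- the events E t
  set E : ℕ → Set Ω := fun t => {ω | ∀ i : Fin n, i.1 ≤ t → X i ω ∈ Xset \ S} with hE
  have hEmeas : ∀ t, MeasurableSet (E t) := by
    intro t
    have h1 : E t = ⋂ i : Fin n, ⋂ _ : i.1 ≤ t, X i ⁻¹' (Xset \ S) := by
      ext ω; simp [hE]
    rw [h1]
    exact MeasurableSet.iInter fun i => MeasurableSet.iInter fun _ => hXmeas i (hXm.diff hS)
  have hstep : ∀ t, t < n → P (E t) ≤ r ^ (t + 1) := by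
    intro t
    induction t with
    | zero =>
      intro h0
      have h1 : E 0 = X ⟨0, h0⟩ ⁻¹' (Xset \ S) := by
        ext ω
        simp only [hE, mem_setOf_eq, mem_preimage]
        constructor
        · intro hh; exact hh ⟨0, h0⟩ le_rfl
        · intro hh i hi
          have : i = ⟨0, h0⟩ := Fin.ext (Nat.le_zero.mp hi)
          rwa [this]
      rw [h1, ← Measure.map_apply (hXmeas _) (hXm.diff hS), hX0 h0, pow_one]
      exact measure_mono (diff_subset_compl _ _)
    | succ t ih =>
      intro h1
      have ht' : t < n := by omega
      have hEsub : E (t + 1) ⊆ E t ∩ X ⟨t + 1, h1⟩ ⁻¹' Sᶜ := by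
        intro ω hω
        exact ⟨fun i hi => hω i (by omega), (hω ⟨t + 1, h1⟩ le_rfl).2⟩
      refine le_trans (measure_mono hEsub) ?_
      have hBmeas : MeasurableSet {v : Fin (t+1) → Euc d | ∀ i, v i ∈ Xset \ S} := by
        have h2 : {v : Fin (t+1) → Euc d | ∀ i, v i ∈ Xset \ S}
            = ⋂ i : Fin (t+1), (fun v : Fin (t+1) → Euc d => v i) ⁻¹' (Xset \ S) := by
          ext v; simp
        rw [h2]
        exact MeasurableSet.iInter fun i => (measurable_pi_apply i) (hXm.diff hS)
      have hEW : E t = (fun ω' => fun i : Fin (t+1) => X (Fin.castLE h1.le i) ω') ⁻¹'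
          {v : Fin (t+1) → Euc d | ∀ i, v i ∈ Xset \ S} := by
        ext ω
        simp only [hE, mem_setOf_eq, mem_preimage]
        constructor
        · intro hh j
          exact hh (Fin.castLE h1.le j) (by simpa using Nat.lt_succ_iff.mp j.2)
        · intro hh i hi
          have h3 := hh ⟨i.1, by omega⟩
          have hcast : Fin.castLE h1.le ⟨i.1, by omega⟩ = i := rfl
          rwa [hcast] at h3
      have hkey : P (E t ∩ X ⟨t + 1, h1⟩ ⁻¹' Sᶜ)
          = ∫⁻ ω in E t,
              condDistrib (X ⟨t+1, h1⟩)
                (fun ω' => fun i : Fin (t+1) => X (Fin.castLE h1.le i) ω') P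
                ((fun ω' => fun i : Fin (t+1) => X (Fin.castLE h1.le i) ω') ω) Sᶜ ∂P := by
        conv_lhs => rw [hEW]
        conv_rhs => rw [hEW]
        exact (setLIntegral_preimage_condDistrib
          (measurable_pi_lambda _ fun i => hXmeas _) (hXmeas _).aemeasurable
          hS.compl hBmeas).symm
      rw [hkey]
      have hbound : ∀ᵐ ω ∂P, ω ∈ E t →
          condDistrib (X ⟨t+1, h1⟩)
            (fun ω' => fun i : Fin (t+1) => X (Fin.castLE h1.le i) ω') P
            ((fun ω' => fun i : Fin (t+1) => X (Fin.castLE h1.le i) ω') ω) Sᶜ ≤ r := by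
      -- to fill
        filter_upwards [hcond t h1] with ω hω hωE
        obtain ⟨A, hAm, hA0, hsubA, hAX, hκ⟩ := hω
        rw [hκ]
        have hSA : S ⊆ A := by
          intro x hx
          refine hsubA ⟨hx.1, fun i => ?_⟩
          have hXi := hωE (Fin.castLE h1.le i) (by simpa using Nat.lt_succ_iff.mp i.2)
          have hnot : ¬ y ≤ f (X (Fin.castLE h1.le i) ω) := fun hy => hXi.2 ⟨hXi.1, hy⟩
          exact ((not_le.1 hnot).trans_le hx.2).le
        exact unif_compl_le hXm hAm hS hSA hAX hA0.ne' hVtop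
      have hmono : ∫⁻ ω in E t,
            condDistrib (X ⟨t+1, h1⟩)
              (fun ω' => fun i : Fin (t+1) => X (Fin.castLE h1.le i) ω') P
              ((fun ω' => fun i : Fin (t+1) => X (Fin.castLE h1.le i) ω') ω) Sᶜ ∂P
          ≤ ∫⁻ _ in E t, r ∂P :=
        lintegral_mono_ae ((ae_restrict_iff' (hEmeas t)).2 hbound)
      refine le_trans hmono ?_
      rw [setLIntegral_const]
      calc r * P (E t) ≤ r * r ^ (t + 1) := mul_le_mul_right (ih ht') r
        _ = r ^ (t + 1 + 1) := by ring
  -- LHS computation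
  haveI : IsProbabilityMeasure (Measure.pi fun _ : Fin n => unifOn Xset) :=
    MeasureTheory.Measure.pi.instIsProbabilityMeasure _
  have hG : (Measure.pi fun _ : Fin n => unifOn Xset) {x | ∃ i : Fin n, x i ∉ Xset} = 0 := by
    have h1 : {x : Fin n → Euc d | ∃ i, x i ∉ Xset}
        = ⋃ i : Fin n, (fun x : Fin n → Euc d => x i) ⁻¹' Xsetᶜ := by
      ext x; simp
    rw [h1]
    refine measure_iUnion_null fun i => ?_
    have h2 : (fun x : Fin n → Euc d => x i) ⁻¹' Xsetᶜ
        = univ.pi (fun j => if j = i then Xsetᶜ else univ) := by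
      ext x
      simp only [mem_preimage, mem_pi, mem_univ, forall_true_left]
      constructor
      · intro hx j
        by_cases hj : j = i
        · subst hj; simpa using hx
        · simp [hj]
      · intro hx
        simpa using hx i
    rw [h2, Measure.pi_pi]
    refine Finset.prod_eq_zero (Finset.mem_univ i) ?_
    rw [if_pos rfl, unifOn_apply' hXm, compl_inter_self]
    simp
  have hC : (Measure.pi fun _ : Fin n => unifOn Xset) (univ.pi fun _ : Fin n => Sᶜ)
      = r ^ n := by
    rw [Measure.pi_pi, Finset.prod_const, ← hr]
    simp
  have hLHS : (Measure.pi fun _ : Fin n => unifOn Xset) {x | ∃ i : Fin n, y ≤ f (x i)}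
      ≤ 1 - r ^ n := by
    have hsub : {x : Fin n → Euc d | ∃ i, y ≤ f (x i)}
        ⊆ {x | ∃ i, x i ∈ S} ∪ {x | ∃ i, x i ∉ Xset} := by
      rintro x ⟨i, hi⟩
      by_cases hx : x i ∈ Xset
      · exact Or.inl ⟨i, hx, hi⟩
      · exact Or.inr ⟨i, hx⟩
    refine le_trans (measure_mono hsub) ?_
    refine le_trans (measure_union_le _ _) ?_
    rw [hG, add_zero]
    have hcompl : {x : Fin n → Euc d | ∃ i, x i ∈ S} = (univ.pi fun _ : Fin n => Sᶜ)ᶜ := by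
      ext x; simp
    rw [hcompl, prob_compl_eq_one_sub (MeasurableSet.univ_pi fun _ => hS.compl), hC]
  refine le_trans hLHS ?_
  -- RHS bound
  have hsub2 : {ω | ∃ i : Fin n, X i ω ∈ S} ⊆ {ω | ∃ i : Fin n, y ≤ f (X i ω)} := by
    rintro ω ⟨i, hi⟩; exact ⟨i, hi.2⟩
  refine le_trans ?_ (measure_mono hsub2)
  have hmeas2 : MeasurableSet {ω | ∀ i : Fin n, X i ω ∉ S} := by
    have h1 : {ω | ∀ i : Fin n, X i ω ∉ S} = ⋂ i : Fin n, X i ⁻¹' Sᶜ := by ext; simp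
    rw [h1]
    exact MeasurableSet.iInter fun i => hXmeas i hS.compl
  have h1 : {ω | ∃ i : Fin n, X i ω ∈ S} = {ω | ∀ i : Fin n, X i ω ∉ S}ᶜ := by
    ext; simp
  rw [h1, prob_compl_eq_one_sub hmeas2]
  refine tsub_le_tsub_left ?_ 1
  have hbad : P {ω | ∃ i : Fin n, X i ω ∉ Xset} = 0 := by
    have h2 : {ω | ∃ i : Fin n, X i ω ∉ Xset} = ⋃ i : Fin n, {ω | X i ω ∉ Xset} := by
      ext; simp
    rw [h2]
    exact measure_iUnion_null fun i => ae_iff.1 (Hrange i)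
  have hsub3 : {ω | ∀ i : Fin n, X i ω ∉ S}
      ⊆ E (n - 1) ∪ {ω | ∃ i : Fin n, X i ω ∉ Xset} := by
    intro ω hω
    by_cases hall : ∀ i : Fin n, X i ω ∈ Xset
    · exact Or.inl fun i _ => ⟨hall i, hω i⟩
    · push_neg at hall; exact Or.inr hall
  calc P {ω | ∀ i : Fin n, X i ω ∉ S} ≤ P (E (n - 1)) + P {ω | ∃ i : Fin n, X i ω ∉ Xset} :=
        le_trans (measure_mono hsub3) (measure_union_le _ _)
    _ = P (E (n - 1)) := by rw [hbad, add_zero]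
    _ ≤ r ^ (n - 1 + 1) := hstep (n - 1) (by omega)
    _ = r ^ n := by congr 1; omega
end

section
/- Let X ⊂ ℝ^d be a compact convex set with nonempty interior, let f : X → ℝ have a continuous induced ranking rule, let (X_1, …, X_n) be a RankOpt-type process for f on X, and let (X*_1, …, X*_n) be a Pure Adaptive Search for f on X. Then for every y ∈ ℝ, P(max_{1≤i≤n} f(X_i) ≥ y) ≤ P(f(X*_n) ≥ y). -/
open MeasureTheory ProbabilityTheory Set
open scoped ENNReal NNReal BigOperators

/-! ### Auxiliary development for Proposition 7 -/

namespace RankOptAux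

noncomputable section

open Filter

lemma sign_le_zero_iff_of_sign_eq {r s : ℝ} (hrs : Real.sign r = Real.sign s) :
    r ≤ 0 ↔ s ≤ 0 := by
  rcases lt_trichotomy r 0 with hr | hr | hr <;>
    rcases lt_trichotomy s 0 with hs | hs | hs <;>
    simp only [Real.sign_of_neg, Real.sign_of_pos, Real.sign_zero, hr, hs] at hrs ⊢ <;>
    first
      | (constructor <;> intro <;> linarith)
      | norm_num at hrs

lemma ennreal_inv_mul_self_le_one (a : ℝ≥0∞) : a⁻¹ * a ≤ 1 := by
  rcases eq_or_ne a 0 with rfl | h0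
  · simp
  rcases eq_or_ne a ⊤ with rfl | htop
  · simp
  · rw [ENNReal.inv_mul_cancel h0 htop]

lemma unifOn_apply {E : Type*} [MeasureSpace E] (s : Set E) {t : Set E}
    (ht : MeasurableSet t) :
    unifOn s t = (volume s)⁻¹ * volume (t ∩ s) := by
  rw [unifOn, Measure.smul_apply, Measure.restrict_apply ht, smul_eq_mul]

lemma lintegral_unifOn {E : Type*} [MeasureSpace E] (s : Set E) (g : E → ℝ≥0∞) :
    ∫⁻ x, g x ∂(unifOn s) = (volume s)⁻¹ * ∫⁻ x in s, g x ∂volume := by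
  rw [unifOn, lintegral_smul_measure, smul_eq_mul]

variable {d : ℕ}

/-- Upper level set of `h` at level `h x`, within `Xs`. -/
def lev (Xs : Set (Euc d)) (h : Euc d → ℝ) (x : Euc d) : Set (Euc d) :=
  {x' ∈ Xs | h x ≤ h x'}

lemma measurableSet_lev {Xs : Set (Euc d)} (hXs : MeasurableSet Xs)
    {h : Euc d → ℝ} (hh : Measurable h) (x : Euc d) :
    MeasurableSet (lev Xs h x) :=
  hXs.inter (measurableSet_le measurable_const hh)

lemma lev_subset {Xs : Set (Euc d)} {h : Euc d → ℝ} (x : Euc d) :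
    lev Xs h x ⊆ Xs := fun _ hx => hx.1

lemma lev_mono {Xs : Set (Euc d)} {h : Euc d → ℝ} {x x' : Euc d} (hxx' : h x ≤ h x') :
    lev Xs h x' ⊆ lev Xs h x := fun _ hy => ⟨hy.1, hxx'.trans hy.2⟩

/-- The point of maximal `h`-value among `w 0, …, w k`. -/
def maxPt (h : Euc d → ℝ) : ∀ {k : ℕ}, (Fin (k + 1) → Euc d) → Euc d
  | 0, w => w 0
  | k + 1, w =>
      if h (maxPt h (fun i : Fin (k + 1) => w i.castSucc)) < h (w (Fin.last (k + 1)))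
        then w (Fin.last (k + 1))
        else maxPt h (fun i : Fin (k + 1) => w i.castSucc)

lemma maxPt_zero (h : Euc d → ℝ) (w : Fin 1 → Euc d) : maxPt h w = w 0 := rfl

lemma maxPt_succ (h : Euc d → ℝ) {k : ℕ} (w : Fin (k + 2) → Euc d) :
    maxPt h w =
      if h (maxPt h (fun i : Fin (k + 1) => w i.castSucc)) < h (w (Fin.last (k + 1)))
        then w (Fin.last (k + 1))
        else maxPt h (fun i : Fin (k + 1) => w i.castSucc) := rfl

lemma exists_maxPt_eq (h : Euc d → ℝ) : ∀ {k : ℕ} (w : Fin (k + 1) → Euc d),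
    ∃ j, maxPt h w = w j := by
  intro k
  induction k with
  | zero => intro w; exact ⟨0, rfl⟩
  | succ k IH =>
      intro w
      rw [maxPt_succ]
      split
      · exact ⟨Fin.last (k + 1), rfl⟩
      · obtain ⟨j, hj⟩ := IH (fun i : Fin (k + 1) => w i.castSucc)
        exact ⟨j.castSucc, hj⟩

lemma le_h_maxPt (h : Euc d → ℝ) : ∀ {k : ℕ} (w : Fin (k + 1) → Euc d) (j : Fin (k + 1)),
    h (w j) ≤ h (maxPt h w) := by
  intro k
  induction k with
  | zero =>
      intro w j
      rw [show j = 0 from Fin.ext (Nat.lt_one_iff.mp j.isLt), maxPt_zero]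
  | succ k IH =>
      intro w j
      rw [maxPt_succ]
      refine Fin.lastCases ?_ ?_ j
      · split
        · exact le_rfl
        · next hlt => exact not_lt.mp hlt
      · intro i
        have hle := IH (fun i : Fin (k + 1) => w i.castSucc) i
        split
        · next hlt => exact hle.trans hlt.le
        · exact hle

lemma measurable_maxPt {h : Euc d → ℝ} (hh : Measurable h) :
    ∀ {k : ℕ}, Measurable fun w : Fin (k + 1) → Euc d => maxPt h w := by
  intro k
  induction k with
  | zero => exact measurable_pi_apply 0
  | succ k IH =>
      have hcomp : Measurable fun w : Fin (k + 2) → Euc d =>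
          (fun i : Fin (k + 1) => w i.castSucc) :=
        measurable_pi_lambda _ fun i => measurable_pi_apply _
      have hm1 : Measurable fun w : Fin (k + 2) → Euc d =>
          maxPt h (fun i : Fin (k + 1) => w i.castSucc) := IH.comp hcomp
      have hlast : Measurable fun w : Fin (k + 2) → Euc d => w (Fin.last (k + 1)) :=
        measurable_pi_apply _
      simp only [maxPt_succ]
      exact Measurable.ite (measurableSet_lt (hh.comp hm1) (hh.comp hlast)) hlast hm1


section UpSets

variable {Xs : Set (Euc d)} {h : Euc d → ℝ}

lemma measurableSet_of_upSet (hXcomp : IsCompact Xs) (hh : Continuous h)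
    {S : Set (Euc d)} (hSX : S ⊆ Xs)
    (hup : ∀ x ∈ S, ∀ x' ∈ Xs, h x ≤ h x' → x' ∈ S) : MeasurableSet S := by
  rcases S.eq_empty_or_nonempty with rfl | hne
  · exact MeasurableSet.empty
  by_cases hatt : ∃ x0 ∈ S, ∀ x1 ∈ S, h x0 ≤ h x1
  · obtain ⟨x0, hx0S, hmin⟩ := hatt
    have hS : S = {x ∈ Xs | h x0 ≤ h x} := by
      ext x
      exact ⟨fun hx => ⟨hSX hx, hmin x hx⟩, fun hx => hup x0 hx0S x hx.1 hx.2⟩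
    rw [hS]
    exact hXcomp.measurableSet.inter (measurableSet_le measurable_const hh.measurable)
  · push_neg at hatt
    set c := sInf (h '' S) with hc
    have hbdd : BddBelow (h '' S) :=
      ((hXcomp.image hh).bddBelow).mono (Set.image_mono (f := h) hSX)
    have hS : S = {x ∈ Xs | c < h x} := by
      ext x
      constructor
      · intro hx
        refine ⟨hSX hx, ?_⟩
        have h1 : c ≤ h x := csInf_le hbdd ⟨x, hx, rfl⟩
        rcases h1.lt_or_eq with h2 | h2
        · exact h2
        · obtain ⟨x1, hx1S, hlt⟩ := hatt x hx
          have h3 : c ≤ h x1 := csInf_le hbdd ⟨x1, hx1S, rfl⟩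
          linarith
      · rintro ⟨hxX, hcx⟩
        obtain ⟨b, ⟨x1, hx1S, rfl⟩, hb⟩ := exists_lt_of_csInf_lt (hne.image h) hcx
        exact hup x1 hx1S x hxX hb.le
    rw [hS]
    exact hXcomp.measurableSet.inter (measurableSet_lt measurable_const hh.measurable)

lemma top_null (hXcomp : IsCompact Xs) (hh : Continuous h) :
    volume {x ∈ Xs | volume (lev Xs h x) = 0} = 0 := by
  set T := {x ∈ Xs | volume (lev Xs h x) = 0} with hTdef
  rcases T.eq_empty_or_nonempty with hTe | hne
  · rw [hTe]; exact measure_empty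
  by_cases hatt : ∃ x0 ∈ T, ∀ x1 ∈ T, h x0 ≤ h x1
  · obtain ⟨x0, hx0T, hmin⟩ := hatt
    refine measure_mono_null (fun x hx => ?_) hx0T.2
    exact ⟨hx.1, hmin x hx⟩
  · push_neg at hatt
    set c := sInf (h '' T) with hc
    have hbdd : BddBelow (h '' T) :=
      ((hXcomp.image hh).bddBelow).mono (Set.image_mono (f := h) (fun x hx => hx.1))
    have hseq : ∀ k : ℕ, ∃ x1 ∈ T, h x1 < c + 1 / (k + 1 : ℝ) := by
      intro k
      have hpos : c < c + 1 / (k + 1 : ℝ) := by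
        have h0 : (0:ℝ) < 1 / (k + 1 : ℝ) := by positivity
        linarith
      obtain ⟨b, ⟨x1, hx1, rfl⟩, hb⟩ := exists_lt_of_csInf_lt (hne.image h) hpos
      exact ⟨x1, hx1, hb⟩
    choose xk hxkT hxk using hseq
    have hsub : T ⊆ ⋃ k : ℕ, lev Xs h (xk k) := by
      intro x hx
      have h1 : c ≤ h x := csInf_le hbdd ⟨x, hx, rfl⟩
      have h2 : c < h x := by
        rcases h1.lt_or_eq with h2 | h2
        · exact h2
        · obtain ⟨x1, hx1T, hlt⟩ := hatt x hx
          have h3 : c ≤ h x1 := csInf_le hbdd ⟨x1, hx1T, rfl⟩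
          linarith
      obtain ⟨k, hk⟩ := exists_nat_one_div_lt (sub_pos.2 h2)
      refine Set.mem_iUnion.2 ⟨k, hx.1, ?_⟩
      have h4 := hxk k
      linarith
    exact measure_mono_null hsub (measure_iUnion_null fun k => (hxkT k).2)

end UpSets

section PhiSec

/-- Average of `ψ` over the upper level set of `x`. -/
def Phi (Xs : Set (Euc d)) (h : Euc d → ℝ) (ψ : Euc d → ℝ≥0∞) (x : Euc d) : ℝ≥0∞ :=
  ∫⁻ x', ψ x' ∂(unifOn (lev Xs h x))

lemma Phi_def (Xs : Set (Euc d)) (h : Euc d → ℝ) (ψ : Euc d → ℝ≥0∞) (x : Euc d) :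
    Phi Xs h ψ x = (volume (lev Xs h x))⁻¹ * ∫⁻ x' in lev Xs h x, ψ x' ∂volume :=
  lintegral_unifOn _ _

variable {Xs : Set (Euc d)} {h : Euc d → ℝ} {ψ : Euc d → ℝ≥0∞}

lemma Phi_le_one (hψ1 : ∀ x, ψ x ≤ 1) (x : Euc d) : Phi Xs h ψ x ≤ 1 := by
  rw [Phi_def]
  calc (volume (lev Xs h x))⁻¹ * ∫⁻ x' in lev Xs h x, ψ x' ∂volume
      ≤ (volume (lev Xs h x))⁻¹ * ∫⁻ _ in lev Xs h x, 1 ∂volume :=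
        mul_le_mul_right (lintegral_mono fun y => hψ1 y) _
    _ = (volume (lev Xs h x))⁻¹ * volume (lev Xs h x) := by
        rw [setLIntegral_const, one_mul]
    _ ≤ 1 := ennreal_inv_mul_self_le_one _

lemma measurable_Phi (hXs : MeasurableSet Xs) (hh : Measurable h) (ψ : Euc d → ℝ≥0∞) :
    Measurable (Phi Xs h ψ) := by
  have hrepr : Phi Xs h ψ = (fun c : ℝ =>
      (volume {x' ∈ Xs | c ≤ h x'})⁻¹ * ∫⁻ x' in {x' ∈ Xs | c ≤ h x'}, ψ x' ∂volume) ∘ h := by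
    funext x
    rw [Phi_def]; rfl
  rw [hrepr]
  have hv : Antitone fun c : ℝ => volume {x' ∈ Xs | c ≤ h x'} := fun c c' hcc' =>
    measure_mono fun y hy => Set.mem_sep hy.1 (hcc'.trans hy.2)
  have hJ : Antitone fun c : ℝ => ∫⁻ x' in {x' ∈ Xs | c ≤ h x'}, ψ x' ∂volume :=
    fun c c' hcc' => lintegral_mono'
      (Measure.restrict_mono (fun y hy => Set.mem_sep hy.1 (hcc'.trans hy.2)) le_rfl) le_rfl
  exact ((hv.measurable.inv).mul hJ.measurable).comp hh

lemma le_Phi (hXs : MeasurableSet Xs) (hXfin : volume Xs ≠ ⊤) (hh : Measurable h)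
    (hmono : ∀ x ∈ Xs, ∀ x' ∈ Xs, h x ≤ h x' → volume (lev Xs h x') ≠ 0 → ψ x ≤ ψ x')
    (hae : ∀ᵐ x ∂(volume : Measure (Euc d)), x ∈ Xs → volume (lev Xs h x) ≠ 0)
    {b x' : Euc d} (hb : b ∈ Xs) (hx' : x' ∈ Xs) (hbx' : h b ≤ h x')
    (hpos : volume (lev Xs h x') ≠ 0) :
    ψ b ≤ Phi Xs h ψ x' := by
  have hfin : volume (lev Xs h x') ≠ ⊤ :=
    ne_top_of_le_ne_top hXfin (measure_mono (lev_subset x'))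
  have h1 : ∀ᵐ y ∂(volume.restrict (lev Xs h x')), ψ b ≤ ψ y := by
    filter_upwards [ae_restrict_of_ae hae, ae_restrict_mem (measurableSet_lev hXs hh x')]
      with y hy hyB
    exact hmono b hb y hyB.1 (hbx'.trans hyB.2) (hy hyB.1)
  have h2 : ψ b * volume (lev Xs h x') ≤ ∫⁻ y in lev Xs h x', ψ y ∂volume := by
    rw [← setLIntegral_const (lev Xs h x') (ψ b)]
    exact lintegral_mono_ae h1
  rw [Phi_def]
  calc ψ b = (volume (lev Xs h x'))⁻¹ * (ψ b * volume (lev Xs h x')) := by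
        rw [← mul_assoc, mul_comm (volume (lev Xs h x'))⁻¹ (ψ b), mul_assoc,
          ENNReal.inv_mul_cancel hpos hfin, mul_one]
    _ ≤ (volume (lev Xs h x'))⁻¹ * ∫⁻ y in lev Xs h x', ψ y ∂volume := mul_le_mul_right h2 _

lemma Phi_mono (hXs : MeasurableSet Xs) (hXfin : volume Xs ≠ ⊤) (hh : Measurable h)
    (hmono : ∀ x ∈ Xs, ∀ x' ∈ Xs, h x ≤ h x' → volume (lev Xs h x') ≠ 0 → ψ x ≤ ψ x')
    (hae : ∀ᵐ x ∂(volume : Measure (Euc d)), x ∈ Xs → volume (lev Xs h x) ≠ 0)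
    {x x' : Euc d} (hx : x ∈ Xs) (hx' : x' ∈ Xs) (hxx' : h x ≤ h x')
    (hpos : volume (lev Xs h x') ≠ 0) :
    Phi Xs h ψ x ≤ Phi Xs h ψ x' := by
  set B := lev Xs h x with hB
  set B' := lev Xs h x' with hB'
  have hsub : B' ⊆ B := lev_mono hxx'
  have hBm : MeasurableSet B := measurableSet_lev hXs hh x
  have hB'm : MeasurableSet B' := measurableSet_lev hXs hh x'
  have hfin' : volume B' ≠ ⊤ := ne_top_of_le_ne_top hXfin (measure_mono (lev_subset x'))
  set c' := Phi Xs h ψ x' with hc'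
  have hint' : ∫⁻ y in B', ψ y ∂volume = volume B' * c' := by
    rw [hc', Phi_def, ← hB', ← mul_assoc, ENNReal.mul_inv_cancel hpos hfin', one_mul]
  have hdiff : ∫⁻ y in B \ B', ψ y ∂volume ≤ c' * volume (B \ B') := by
    have hptwise : ∀ᵐ y ∂(volume.restrict (B \ B')), ψ y ≤ c' := by
      filter_upwards [ae_restrict_mem (hBm.diff hB'm)] with y hy
      have hyXs : y ∈ Xs := hy.1.1
      have hyh : h y ≤ h x' := by
        by_contra hcon
        push_neg at hcon
        exact hy.2 ⟨hyXs, hcon.le⟩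
      exact le_Phi hXs hXfin hh hmono hae hyXs hx' hyh hpos
    calc ∫⁻ y in B \ B', ψ y ∂volume ≤ ∫⁻ _ in B \ B', c' ∂volume := lintegral_mono_ae hptwise
      _ = c' * volume (B \ B') := setLIntegral_const _ _
  have hsplit := lintegral_union (μ := volume) (f := ψ) (hBm.diff hB'm)
    (disjoint_sdiff_self_right : Disjoint B' (B \ B'))
  rw [Set.union_diff_cancel hsub] at hsplit
  have hvol : volume B' + volume (B \ B') = volume B := by
    rw [← measure_inter_add_diff B hB'm, Set.inter_eq_self_of_subset_right hsub]
  have hBle : ∫⁻ y in B, ψ y ∂volume ≤ c' * volume B := by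
    calc ∫⁻ y in B, ψ y ∂volume
        = ∫⁻ y in B', ψ y ∂volume + ∫⁻ y in B \ B', ψ y ∂volume := hsplit
      _ ≤ volume B' * c' + c' * volume (B \ B') := add_le_add hint'.le hdiff
      _ = c' * (volume B' + volume (B \ B')) := by ring
      _ = c' * volume B := by rw [hvol]
  rw [Phi_def, ← hB]
  calc (volume B)⁻¹ * ∫⁻ y in B, ψ y ∂volume
      ≤ (volume B)⁻¹ * (c' * volume B) := mul_le_mul_right hBle _
    _ = c' * ((volume B)⁻¹ * volume B) := by ring
    _ ≤ c' * 1 := mul_le_mul_right (ennreal_inv_mul_self_le_one _) _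
    _ = c' := mul_one _

lemma cond_step (hXs : MeasurableSet Xs) (hXfin : volume Xs ≠ ⊤) (hh : Measurable h)
    (hmono : ∀ x ∈ Xs, ∀ x' ∈ Xs, h x ≤ h x' → volume (lev Xs h x') ≠ 0 → ψ x ≤ ψ x')
    (hae : ∀ᵐ x ∂(volume : Measure (Euc d)), x ∈ Xs → volume (lev Xs h x) ≠ 0)
    {x : Euc d} (hx : x ∈ Xs) (hpos : volume (lev Xs h x) ≠ 0)
    {A : Set (Euc d)} (hAm : MeasurableSet A) (hLA : lev Xs h x ⊆ A) (hAX : A ⊆ Xs) :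
    ∫⁻ y, (if h x < h y then ψ y else ψ x) ∂(unifOn A) ≤ Phi Xs h ψ x := by
  set L := lev Xs h x with hL
  have hLm : MeasurableSet L := measurableSet_lev hXs hh x
  have hLfin : volume L ≠ ⊤ := ne_top_of_le_ne_top hXfin (measure_mono (lev_subset x))
  set c := Phi Xs h ψ x with hc
  have hψxc : ψ x ≤ c := le_Phi hXs hXfin hh hmono hae hx hx le_rfl hpos
  have hIL : ∫⁻ y in L, (if h x < h y then ψ y else ψ x) ∂volume
      ≤ ∫⁻ y in L, ψ y ∂volume := by
    refine lintegral_mono_ae ?_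
    filter_upwards [ae_restrict_of_ae hae, ae_restrict_mem hLm] with y hy hyL
    split
    · exact le_rfl
    · exact hmono x hx y hyL.1 hyL.2 (hy hyL.1)
  have hintL : ∫⁻ y in L, ψ y ∂volume = volume L * c := by
    rw [hc, Phi_def, ← hL, ← mul_assoc, ENNReal.mul_inv_cancel hpos hLfin, one_mul]
  have hIdiff : ∫⁻ y in A \ L, (if h x < h y then ψ y else ψ x) ∂volume
      ≤ c * volume (A \ L) := by
    have hptwise : ∀ᵐ y ∂(volume.restrict (A \ L)),
        (if h x < h y then ψ y else ψ x) ≤ c := by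
      filter_upwards [ae_restrict_mem (hAm.diff hLm)] with y hy
      have hyh : h y < h x := by
        by_contra hcon
        push_neg at hcon
        exact hy.2 ⟨hAX hy.1, hcon⟩
      rw [if_neg (by linarith)]
      exact hψxc
    calc ∫⁻ y in A \ L, (if h x < h y then ψ y else ψ x) ∂volume
        ≤ ∫⁻ _ in A \ L, c ∂volume := lintegral_mono_ae hptwise
      _ = c * volume (A \ L) := setLIntegral_const _ _
  have hsplit := lintegral_union (μ := volume)
    (f := fun y => if h x < h y then ψ y else ψ x) (hAm.diff hLm)
    (disjoint_sdiff_self_right : Disjoint L (A \ L))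
  rw [Set.union_diff_cancel hLA] at hsplit
  have hvol : volume L + volume (A \ L) = volume A := by
    rw [← measure_inter_add_diff A hLm, Set.inter_eq_self_of_subset_right hLA]
  rw [lintegral_unifOn, hsplit]
  calc (volume A)⁻¹ * (∫⁻ y in L, (if h x < h y then ψ y else ψ x) ∂volume
        + ∫⁻ y in A \ L, (if h x < h y then ψ y else ψ x) ∂volume)
      ≤ (volume A)⁻¹ * (volume L * c + c * volume (A \ L)) :=
        mul_le_mul_right (add_le_add (hIL.trans hintL.le) hIdiff) _
    _ = c * ((volume A)⁻¹ * volume A) := by rw [← hvol]; ring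
    _ ≤ c * 1 := mul_le_mul_right (ennreal_inv_mul_self_le_one _) _
    _ = c := mul_one _

end PhiSec

section CondDistribTools

variable {Ω : Type*} [MeasurableSpace Ω] {β : Type*} [MeasurableSpace β]
  {E : Type*} [MeasurableSpace E] [StandardBorelSpace E] [Nonempty E]

lemma lintegral_comp_condDistrib (P : Measure Ω) [IsFiniteMeasure P]
    {Y : Ω → E} {W : Ω → β} (hY : Measurable Y) (hW : Measurable W)
    {g : β × E → ℝ≥0∞} (hg : Measurable g) :
    ∫⁻ ω, g (W ω, Y ω) ∂P
      = ∫⁻ ω, ∫⁻ y, g (W ω, y) ∂(condDistrib Y W P (W ω)) ∂P := by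
  have hpair : Measurable fun ω => (W ω, Y ω) := hW.prodMk hY
  have hd : P.map W ⊗ₘ condDistrib Y W P = P.map (fun ω => (W ω, Y ω)) := by
    rw [condDistrib, ← Measure.fst_map_prodMk (X := W) hY]
    exact (P.map fun ω => (W ω, Y ω)).disintegrate _
  calc ∫⁻ ω, g (W ω, Y ω) ∂P
      = ∫⁻ p, g p ∂(P.map fun ω => (W ω, Y ω)) := (lintegral_map hg hpair).symm
    _ = ∫⁻ p, g p ∂(P.map W ⊗ₘ condDistrib Y W P) := by rw [hd]
    _ = ∫⁻ w, ∫⁻ y, g (w, y) ∂(condDistrib Y W P w) ∂(P.map W) :=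
        Measure.lintegral_compProd hg
    _ = ∫⁻ ω, ∫⁻ y, g (W ω, y) ∂(condDistrib Y W P (W ω)) ∂P :=
        lintegral_map (Measurable.lintegral_kernel_prod_right' hg) hW

lemma measure_preimage_condDistrib (P : Measure Ω) [IsFiniteMeasure P]
    {Y : Ω → E} {W : Ω → β} (hY : Measurable Y) (hW : Measurable W)
    {N : Set E} (hN : MeasurableSet N) :
    P (Y ⁻¹' N) = ∫⁻ ω, condDistrib Y W P (W ω) N ∂P := by
  have hg : Measurable fun p : β × E => N.indicator (fun _ => (1:ℝ≥0∞)) p.2 :=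
    (measurable_one.indicator hN).comp measurable_snd
  calc P (Y ⁻¹' N) = ∫⁻ ω, (Y ⁻¹' N).indicator (fun _ => (1:ℝ≥0∞)) ω ∂P :=
        (lintegral_indicator_one (hY hN)).symm
    _ = ∫⁻ ω, N.indicator (fun _ => (1:ℝ≥0∞)) (Y ω) ∂P := lintegral_congr fun ω => by
        by_cases hω : Y ω ∈ N <;> simp [Set.indicator, hω]
    _ = ∫⁻ ω, ∫⁻ y, N.indicator (fun _ => (1:ℝ≥0∞)) y ∂(condDistrib Y W P (W ω)) ∂P :=
        lintegral_comp_condDistrib P hY hW hg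
    _ = ∫⁻ ω, condDistrib Y W P (W ω) N ∂P :=
        lintegral_congr fun ω => lintegral_indicator_one hN

end CondDistribTools

end

end RankOptAux
open RankOptAux in
/-- **Proposition 7 of the paper**: a RankOpt-type process is stochastically dominated by a
Pure Adaptive Search with the same number of evaluations:
`P(max_i f(X_i) ≥ y) ≤ P(f(X⋆_n) ≥ y)`. -/
theorem rankopt_dominated_by_pas
    {d : ℕ} {Xset : Set (Euc d)} (hXcomp : IsCompact Xset) (hXconv : Convex ℝ Xset)
    (hXint : (interior Xset).Nonempty)
    {f : Euc d → ℝ} (hf : HasContinuousRanking Xset f)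
    {Ω : Type*} [MeasurableSpace Ω] {P : Measure Ω} [IsProbabilityMeasure P]
    {Ω' : Type*} [MeasurableSpace Ω'] {P' : Measure Ω'} [IsProbabilityMeasure P']
    {n : ℕ} (hn : 0 < n) {X : Fin n → Ω → Euc d}
    (hproc : IsRankOptProcess P Xset f n X)
    {Xstar : Fin n → Ω' → Euc d} (hpas : IsPureAdaptiveSearch P' Xset f n Xstar)
    (y : ℝ) :
    P {ω | ∃ i : Fin n, y ≤ f (X i ω)}
      ≤ P' {ω' | y ≤ f (Xstar ⟨n - 1, by omega⟩ ω')} := by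
  classical
  -- extend the continuous ranking function to all of `ℝ^d`
  obtain ⟨h0, h0cont, h0sign⟩ := hf
  obtain ⟨H, hH⟩ := ContinuousMap.exists_restrict_eq hXcomp.isClosed
    (⟨Xset.restrict h0, h0cont.restrict⟩ : C(Xset, ℝ))
  set h : Euc d → ℝ := ⇑H with hhdef
  have hhc : Continuous h := H.continuous
  have hh : Measurable h := hhc.measurable
  have hHeq : ∀ x ∈ Xset, h x = h0 x := by
    intro x hx
    have := DFunLike.congr_fun hH (⟨x, hx⟩ : Xset)
    exact this
  have hfh : ∀ a ∈ Xset, ∀ b ∈ Xset, (f a ≤ f b ↔ h a ≤ h b) := by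
    intro a ha b hb
    have hsign := h0sign a ha b hb
    rw [← hHeq a ha, ← hHeq b hb] at hsign
    have hiff := sign_le_zero_iff_of_sign_eq hsign
    rw [sub_nonpos, sub_nonpos] at hiff
    exact hiff
  -- basic measure facts
  have hXm : MeasurableSet Xset := hXcomp.measurableSet
  have hXfin : volume Xset ≠ ⊤ := hXcomp.measure_lt_top.ne
  have hTnull : volume {x ∈ Xset | volume (lev Xset h x) = 0} = 0 := top_null hXcomp hhc
  have hae : ∀ᵐ x ∂(volume : Measure (Euc d)), x ∈ Xset → volume (lev Xset h x) ≠ 0 := by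
    rw [ae_iff]
    refine measure_mono_null (fun x hx => ?_) hTnull
    simp only [Set.mem_setOf_eq] at hx ⊢
    push_neg at hx
    exact ⟨hx.1, hx.2⟩
  obtain ⟨Nt, hTN, hNtm, hNtnull⟩ := exists_measurable_superset_of_null hTnull
  set N : Set (Euc d) := Xsetᶜ ∪ Nt with hNdef
  have hNm : MeasurableSet N := hXm.compl.union hNtm
  have hNgood : ∀ x, x ∉ N → x ∈ Xset ∧ volume (lev Xset h x) ≠ 0 := by
    intro x hx
    have hxX : x ∈ Xset := by
      by_contra hc; exact hx (Or.inl hc)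
    exact ⟨hxX, fun h0' => hx (Or.inr (hTN ⟨hxX, h0'⟩))⟩
  have hunifN : ∀ s : Set (Euc d), s ⊆ Xset → unifOn s N = 0 := by
    intro s hs
    rw [unifOn_apply s hNm]
    have hz : volume (N ∩ s) = 0 := by
      refine measure_mono_null (fun z hz => ?_) hNtnull
      rcases hz.1 with hz1 | hz2
      · exact absurd (hs hz.2) hz1
      · exact hz2
    rw [hz, mul_zero]
  obtain ⟨hXmeas, hX0, hXstep⟩ := hproc
  obtain ⟨hSmeas, hS0, hSstep⟩ := hpas
  -- a.e. goodness of every sample point of the RankOpt process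
  have hXnull : ∀ j : Fin n, P (X j ⁻¹' N) = 0 := by
    rintro ⟨j, hj⟩
    cases j with
    | zero =>
        rw [← Measure.map_apply (hXmeas _) hNm, hX0 hj, hunifN Xset subset_rfl]
    | succ t =>
        have htlt : t + 1 < n := hj
        have hWmeas : Measurable fun ω => fun i : Fin (t + 1) => X (Fin.castLE htlt.le i) ω :=
          measurable_pi_lambda _ fun i => hXmeas _
        rw [measure_preimage_condDistrib P (hXmeas _) hWmeas hNm]
        have hz : ∀ᵐ ω ∂P,
            condDistrib (X ⟨t + 1, htlt⟩)
              (fun ω' => fun i : Fin (t + 1) => X (Fin.castLE htlt.le i) ω') P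
              (fun i : Fin (t + 1) => X (Fin.castLE htlt.le i) ω) N = 0 := by
          filter_upwards [hXstep t htlt] with ω hω
          obtain ⟨A, hAm, hApos, hsub1, hsub2, hκ⟩ := hω
          rw [hκ, hunifN A hsub2]
        rw [lintegral_congr_ae hz, lintegral_zero]
  have hXgood : ∀ j : Fin n, ∀ᵐ ω ∂P,
      X j ω ∈ Xset ∧ volume (lev Xset h (X j ω)) ≠ 0 := by
    intro j
    rw [ae_iff]
    refine measure_mono_null (fun ω hω => ?_) (hXnull j)
    simp only [Set.mem_setOf_eq] at hω
    by_contra hc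
    exact hω (hNgood _ hc)
  -- a.e. goodness of every sample point of the PAS process
  have hSnull : ∀ j : Fin n, P' (Xstar j ⁻¹' N) = 0 := by
    rintro ⟨j, hj⟩
    cases j with
    | zero =>
        rw [← Measure.map_apply (hSmeas _) hNm, hS0 hj, hunifN Xset subset_rfl]
    | succ t =>
        have htlt : t + 1 < n := hj
        have htle : t < n := by omega
        rw [measure_preimage_condDistrib P' (hSmeas ⟨t + 1, htlt⟩) (hSmeas ⟨t, htle⟩) hNm]
        have hz : ∀ᵐ ω ∂P',
            condDistrib (Xstar ⟨t + 1, htlt⟩) (Xstar ⟨t, htle⟩) P'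
              (Xstar ⟨t, htle⟩ ω) N = 0 := by
          filter_upwards [hSstep t htlt] with ω hω
          have hω' : condDistrib (Xstar ⟨t + 1, htlt⟩) (Xstar ⟨t, htle⟩) P'
              (Xstar ⟨t, htle⟩ ω)
              = unifOn {x ∈ Xset | f (Xstar (⟨t, htle⟩ : Fin n) ω) ≤ f x} := hω
          rw [hω', hunifN _ (fun z hz => hz.1)]
        rw [lintegral_congr_ae hz, lintegral_zero]
  have hSgood : ∀ j : Fin n, ∀ᵐ ω' ∂P',
      Xstar j ω' ∈ Xset ∧ volume (lev Xset h (Xstar j ω')) ≠ 0 := by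
    intro j
    rw [ae_iff]
    refine measure_mono_null (fun ω hω => ?_) (hSnull j)
    simp only [Set.mem_setOf_eq] at hω
    by_contra hc
    exact hω (hNgood _ hc)
  -- the main induction: stochastic domination for all monotone ψ
  have main : ∀ t : ℕ, ∀ ht : t < n, ∀ ψ : Euc d → ℝ≥0∞, Measurable ψ → (∀ x, ψ x ≤ 1) →
      (∀ x ∈ Xset, ∀ x' ∈ Xset, h x ≤ h x' → volume (lev Xset h x') ≠ 0 → ψ x ≤ ψ x') →
      ∫⁻ ω, ψ (maxPt h (fun i : Fin (t + 1) => X (Fin.castLE ht i) ω)) ∂P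
        ≤ ∫⁻ ω', ψ (Xstar ⟨t, ht⟩ ω') ∂P' := by
    intro t
    induction t with
    | zero =>
        intro ht ψ hψm hψ1 hψmono
        have hL : ∫⁻ ω, ψ (maxPt h (fun i : Fin (0 + 1) => X (Fin.castLE ht i) ω)) ∂P
            = ∫⁻ x, ψ x ∂(unifOn Xset) := by
          have hpt : ∀ ω, maxPt h (fun i : Fin (0 + 1) => X (Fin.castLE ht i) ω)
              = X ⟨0, ht⟩ ω := fun ω => rfl
          simp only [hpt]
          rw [← hX0 ht, lintegral_map hψm (hXmeas _)]
        have hR : ∫⁻ ω', ψ (Xstar ⟨0, ht⟩ ω') ∂P' = ∫⁻ x, ψ x ∂(unifOn Xset) := by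
          rw [← hS0 ht, lintegral_map hψm (hSmeas _)]
        rw [hL, hR]
    | succ t IH =>
        intro ht ψ hψm hψ1 hψmono
        have htlt : t + 1 < n := ht
        have ht' : t < n := by omega
        have hWmeas : Measurable fun ω => fun i : Fin (t + 1) => X (Fin.castLE htlt.le i) ω :=
          measurable_pi_lambda _ fun i => hXmeas _
        have hgm : Measurable fun p : (Fin (t + 1) → Euc d) × Euc d =>
            if h (maxPt h p.1) < h p.2 then ψ p.2 else ψ (maxPt h p.1) := by
          have hm1 : Measurable fun p : (Fin (t + 1) → Euc d) × Euc d => maxPt h p.1 :=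
            (measurable_maxPt hh).comp measurable_fst
          exact Measurable.ite (measurableSet_lt (hh.comp hm1) (hh.comp measurable_snd))
            (hψm.comp measurable_snd) (hψm.comp hm1)
        have hΦm : Measurable (Phi Xset h ψ) := measurable_Phi hXm hh ψ
        have hΦ1 : ∀ x, Phi Xset h ψ x ≤ 1 := Phi_le_one hψ1
        have hΦmono : ∀ x ∈ Xset, ∀ x' ∈ Xset, h x ≤ h x' →
            volume (lev Xset h x') ≠ 0 → Phi Xset h ψ x ≤ Phi Xset h ψ x' :=
          fun x hx x' hx' hle hpos => Phi_mono hXm hXfin hh hψmono hae hx hx' hle hpos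
        have hallgood : ∀ᵐ ω ∂P, ∀ i : Fin (t + 1),
            X (Fin.castLE htlt.le i) ω ∈ Xset ∧
              volume (lev Xset h (X (Fin.castLE htlt.le i) ω)) ≠ 0 :=
          ae_all_iff.2 fun i => hXgood _
        calc ∫⁻ ω, ψ (maxPt h (fun i : Fin (t + 1 + 1) => X (Fin.castLE ht i) ω)) ∂P
            = ∫⁻ ω, (fun p : (Fin (t + 1) → Euc d) × Euc d =>
                if h (maxPt h p.1) < h p.2 then ψ p.2 else ψ (maxPt h p.1))
                ((fun i : Fin (t + 1) => X (Fin.castLE htlt.le i) ω), X ⟨t + 1, htlt⟩ ω) ∂P := by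
              refine lintegral_congr fun ω => ?_
              rw [maxPt_succ, apply_ite ψ]
              rfl
          _ = ∫⁻ ω, ∫⁻ x', (fun p : (Fin (t + 1) → Euc d) × Euc d =>
                if h (maxPt h p.1) < h p.2 then ψ p.2 else ψ (maxPt h p.1))
                ((fun i : Fin (t + 1) => X (Fin.castLE htlt.le i) ω), x')
                ∂(condDistrib (X ⟨t + 1, htlt⟩)
                  (fun ω' => fun i : Fin (t + 1) => X (Fin.castLE htlt.le i) ω') P
                  (fun i : Fin (t + 1) => X (Fin.castLE htlt.le i) ω)) ∂P :=
              lintegral_comp_condDistrib P (hXmeas _) hWmeas hgm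
          _ ≤ ∫⁻ ω, Phi Xset h ψ
                (maxPt h (fun i : Fin (t + 1) => X (Fin.castLE htlt.le i) ω)) ∂P := by
              refine lintegral_mono_ae ?_
              filter_upwards [hXstep t htlt, hallgood] with ω hω hgood
              obtain ⟨A, hAm, hApos, hsub1, hsub2, hκ⟩ := hω
              rw [hκ]
              obtain ⟨j, hj⟩ := exists_maxPt_eq h
                (fun i : Fin (t + 1) => X (Fin.castLE htlt.le i) ω)
              have hMX : maxPt h (fun i : Fin (t + 1) => X (Fin.castLE htlt.le i) ω) ∈ Xset := by
                rw [hj]; exact (hgood j).1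
              have hMpos : volume (lev Xset h
                  (maxPt h (fun i : Fin (t + 1) => X (Fin.castLE htlt.le i) ω))) ≠ 0 := by
                rw [hj]; exact (hgood j).2
              have hlevsub : lev Xset h
                  (maxPt h (fun i : Fin (t + 1) => X (Fin.castLE htlt.le i) ω)) ⊆ A := by
                refine subset_trans (fun z hz => ?_) hsub1
                refine ⟨hz.1, fun i => ?_⟩
                have hhle : h (X (Fin.castLE htlt.le i) ω) ≤ h z :=
                  le_trans (le_h_maxPt h (fun i : Fin (t + 1) => X (Fin.castLE htlt.le i) ω) i)
                    hz.2
                exact (hfh _ (hgood i).1 _ hz.1).2 hhle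
              exact cond_step hXm hXfin hh hψmono hae hMX hMpos hAm hlevsub hsub2
          _ ≤ ∫⁻ ω', Phi Xset h ψ (Xstar ⟨t, ht'⟩ ω') ∂P' :=
              IH ht' (Phi Xset h ψ) hΦm hΦ1 hΦmono
          _ = ∫⁻ ω', ψ (Xstar ⟨t + 1, htlt⟩ ω') ∂P' := by
              have htool := lintegral_comp_condDistrib P' (hSmeas ⟨t + 1, htlt⟩)
                (hSmeas ⟨t, ht'⟩) (g := fun p : Euc d × Euc d => ψ p.2)
                (hψm.comp measurable_snd)
              rw [htool]
              refine Eq.symm (lintegral_congr_ae ?_)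
              filter_upwards [hSstep t htlt, hSgood ⟨t, ht'⟩] with ω' hω' hgood'
              have hker : condDistrib (Xstar ⟨t + 1, htlt⟩) (Xstar ⟨t, ht'⟩) P'
                  (Xstar ⟨t, ht'⟩ ω')
                  = unifOn {x ∈ Xset | f (Xstar (⟨t, ht'⟩ : Fin n) ω') ≤ f x} := hω'
              have hset : {x ∈ Xset | f (Xstar (⟨t, ht'⟩ : Fin n) ω') ≤ f x}
                  = lev Xset h (Xstar ⟨t, ht'⟩ ω') := by
                ext z
                constructor
                · rintro ⟨hz1, hz2⟩
                  exact ⟨hz1, (hfh _ hgood'.1 _ hz1).1 hz2⟩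
                · rintro ⟨hz1, hz2⟩
                  exact ⟨hz1, (hfh _ hgood'.1 _ hz1).2 hz2⟩
              rw [hker, hset]
              rfl
  -- apply to the indicator of the upper level set at `y`
  set S : Set (Euc d) := {x ∈ Xset | y ≤ f x} with hSdef
  have hSm : MeasurableSet S :=
    measurableSet_of_upSet hXcomp hhc (fun x hx => hx.1)
      (fun x hx x' hx' hle => ⟨hx', le_trans hx.2 ((hfh x hx.1 x' hx').2 hle)⟩)
  have hψm : Measurable (S.indicator (fun _ => (1 : ℝ≥0∞))) :=
    measurable_const.indicator hSm
  have hψ1 : ∀ x, S.indicator (fun _ => (1 : ℝ≥0∞)) x ≤ 1 := by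
    intro x
    by_cases hx : x ∈ S <;> simp [Set.indicator, hx]
  have hψmono : ∀ x ∈ Xset, ∀ x' ∈ Xset, h x ≤ h x' → volume (lev Xset h x') ≠ 0 →
      S.indicator (fun _ => (1 : ℝ≥0∞)) x ≤ S.indicator (fun _ => (1 : ℝ≥0∞)) x' := by
    intro x hx x' hx' hle _
    by_cases hxS : x ∈ S
    · have hx'S : x' ∈ S := ⟨hx', le_trans hxS.2 ((hfh x hx x' hx').2 hle)⟩
      simp [Set.indicator, hxS, hx'S]
    · simp [Set.indicator, hxS]
  have hlast : n - 1 < n := by omega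
  have hmain := main (n - 1) hlast (S.indicator (fun _ => (1 : ℝ≥0∞))) hψm hψ1 hψmono
  have hMmeas : Measurable fun ω =>
      maxPt h (fun i : Fin (n - 1 + 1) => X (Fin.castLE hlast i) ω) :=
    (measurable_maxPt hh).comp (measurable_pi_lambda _ fun i => hXmeas _)
  have hElhs : P {ω | ∃ i : Fin n, y ≤ f (X i ω)}
      ≤ ∫⁻ ω, S.indicator (fun _ => (1 : ℝ≥0∞))
          (maxPt h (fun i : Fin (n - 1 + 1) => X (Fin.castLE hlast i) ω)) ∂P := by
    have hgoodall : ∀ᵐ ω ∂P, ∀ i : Fin n, X i ω ∈ Xset :=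
      ae_all_iff.2 fun i => (hXgood i).mono fun ω hω => hω.1
    have hZ : P {ω | ¬ ∀ i : Fin n, X i ω ∈ Xset} = 0 := ae_iff.1 hgoodall
    have hsubE : {ω | ∃ i : Fin n, y ≤ f (X i ω)} ⊆
        ((fun ω => maxPt h (fun i : Fin (n - 1 + 1) => X (Fin.castLE hlast i) ω)) ⁻¹' S)
          ∪ {ω | ¬ ∀ i : Fin n, X i ω ∈ Xset} := by
      intro ω hω
      by_cases hall : ∀ i : Fin n, X i ω ∈ Xset
      · left
        obtain ⟨i, hi⟩ := hω
        obtain ⟨j, hj⟩ := exists_maxPt_eq h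
          (fun i : Fin (n - 1 + 1) => X (Fin.castLE hlast i) ω)
        have hMX : maxPt h (fun i : Fin (n - 1 + 1) => X (Fin.castLE hlast i) ω) ∈ Xset := by
          rw [hj]; exact hall _
        have hi' : (i : ℕ) < n - 1 + 1 := by omega
        have hcast : Fin.castLE hlast (⟨(i : ℕ), hi'⟩ : Fin (n - 1 + 1)) = i :=
          Fin.ext rfl
        have h1 : h (X i ω) ≤
            h (maxPt h (fun i : Fin (n - 1 + 1) => X (Fin.castLE hlast i) ω)) := by
          rw [← hcast]
          exact le_h_maxPt h (fun i : Fin (n - 1 + 1) => X (Fin.castLE hlast i) ω)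
            ⟨(i : ℕ), hi'⟩
        have h2 : f (X i ω) ≤
            f (maxPt h (fun i : Fin (n - 1 + 1) => X (Fin.castLE hlast i) ω)) :=
          (hfh _ (hall i) _ hMX).2 h1
        exact ⟨hMX, le_trans hi h2⟩
      · right
        exact hall
    calc P {ω | ∃ i : Fin n, y ≤ f (X i ω)}
        ≤ P (((fun ω => maxPt h (fun i : Fin (n - 1 + 1) => X (Fin.castLE hlast i) ω)) ⁻¹' S)
            ∪ {ω | ¬ ∀ i : Fin n, X i ω ∈ Xset}) := measure_mono hsubE
      _ ≤ P ((fun ω => maxPt h (fun i : Fin (n - 1 + 1) => X (Fin.castLE hlast i) ω)) ⁻¹' S)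
            + P {ω | ¬ ∀ i : Fin n, X i ω ∈ Xset} := measure_union_le _ _
      _ = P ((fun ω => maxPt h (fun i : Fin (n - 1 + 1) => X (Fin.castLE hlast i) ω)) ⁻¹' S) := by
            rw [hZ, add_zero]
      _ = ∫⁻ ω, S.indicator (fun _ => (1 : ℝ≥0∞))
            (maxPt h (fun i : Fin (n - 1 + 1) => X (Fin.castLE hlast i) ω)) ∂P := by
            rw [← lintegral_indicator_one (hMmeas hSm)]
            refine lintegral_congr fun ω => ?_
            by_cases hω : maxPt h (fun i : Fin (n - 1 + 1) => X (Fin.castLE hlast i) ω) ∈ S <;>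
              simp [Set.indicator, hω]
  have hErhs : ∫⁻ ω', S.indicator (fun _ => (1 : ℝ≥0∞)) (Xstar ⟨n - 1, hlast⟩ ω') ∂P'
      ≤ P' {ω' | y ≤ f (Xstar (⟨n - 1, by omega⟩ : Fin n) ω')} := by
    have heq : ∫⁻ ω', S.indicator (fun _ => (1 : ℝ≥0∞)) (Xstar ⟨n - 1, hlast⟩ ω') ∂P'
        = P' (Xstar ⟨n - 1, hlast⟩ ⁻¹' S) := by
      rw [← lintegral_indicator_one ((hSmeas _) hSm)]
      refine lintegral_congr fun ω' => ?_
      by_cases hω : Xstar ⟨n - 1, hlast⟩ ω' ∈ S <;> simp [Set.indicator, hω]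
    rw [heq]
    exact measure_mono fun ω' hω' => hω'.2
  exact le_trans (le_trans hElhs hmain) hErhs
end

section
/- Let X ⊂ ℝ^d be a compact convex set with nonempty interior, let f : X → ℝ have a continuous induced ranking rule, attain its maximum on X, and satisfy the identifiability condition. For each n, let (X_1, …, X_n) be a RankOpt-type process for f on X and î_n ∈ argmax_{1≤i≤n} f(X_i). Then f(X_{î_n}) converges in probability to max_{x∈X} f(x) as n → ∞; that is, for every ε > 0, P(f(X_{î_n}) < max_{x∈X} f(x) − ε) → 0. -/
open MeasureTheory ProbabilityTheory Set
open scoped ENNReal NNReal BigOperators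

noncomputable section AuxRankOpt

private lemma sign_pos_trans {a b : ℝ} (h : Real.sign a = Real.sign b) (hb : 0 < b) : 0 < a := by
  rw [Real.sign_of_pos hb] at h
  rcases lt_trichotomy a 0 with h1 | h1 | h1
  · rw [Real.sign_of_neg h1] at h; norm_num at h
  · rw [h1, Real.sign_zero] at h; norm_num at h
  · exact h1

private lemma sign_zero_trans {a b : ℝ} (h : Real.sign a = Real.sign b) (hb : b = 0) : a = 0 := by
  rw [hb, Real.sign_zero] at h
  rcases lt_trichotomy a 0 with h1 | h1 | h1
  · rw [Real.sign_of_neg h1] at h; norm_num at h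
  · exact h1
  · rw [Real.sign_of_pos h1] at h; norm_num at h

private lemma exists_good_S {d : ℕ} {Xset : Set (Euc d)} (hXcomp : IsCompact Xset)
    {f : Euc d → ℝ} (hf : HasContinuousRanking Xset f)
    {c : ℝ} (hvol : 0 < volume {x ∈ Xset | c ≤ f x}) :
    ∃ S : Set (Euc d), MeasurableSet S ∧ S ⊆ Xset ∧ 0 < volume S ∧
      (∀ y ∈ S, c ≤ f y) ∧ ∀ x ∈ Xset, x ∉ S → ∀ y ∈ S, f x < f y := by
  obtain ⟨h, hcont, hsign⟩ := hf
  set Sε : Set (Euc d) := {x ∈ Xset | c ≤ f x} with hSε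
  have hSεX : Sε ⊆ Xset := fun x hx => hx.1
  have hne : Sε.Nonempty := nonempty_of_measure_ne_zero hvol.ne'
  have hbdd : BddBelow (h '' Sε) := by
    have : IsCompact (h '' Xset) := hXcomp.image_of_continuousOn hcont
    exact this.bddBelow.mono (image_mono (f := h) hSεX)
  set r : ℝ := sInf (h '' Sε) with hr
  have claim1 : ∀ x ∈ Sε, r ≤ h x := fun x hx => csInf_le hbdd ⟨x, hx, rfl⟩
  have claim2 : ∀ y ∈ Xset, r < h y → c ≤ f y := by
    intro y hy hry
    obtain ⟨a, ⟨x, hx, rfl⟩, hlt⟩ := exists_lt_of_csInf_lt (hne.image h) hry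
    have hpos : 0 < f y - f x :=
      sign_pos_trans (hsign y hy x (hSεX hx)) (sub_pos.2 hlt)
    linarith [hx.2]
  by_cases hcase : ∃ x1, x1 ∈ Xset ∧ h x1 = r ∧ c ≤ f x1
  · obtain ⟨x1, hx1X, hx1r, hx1c⟩ := hcase
    refine ⟨{x ∈ Xset | r ≤ h x}, ?_, fun x hx => hx.1, ?_, ?_, ?_⟩
    · exact (hcont.preimage_isClosed_of_isClosed hXcomp.isClosed isClosed_Ici).measurableSet
    · exact lt_of_lt_of_le hvol (measure_mono fun x hx => ⟨hx.1, claim1 x hx⟩)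
    · intro y hy
      rcases eq_or_lt_of_le hy.2 with heq | hlt
      · have : f y - f x1 = 0 :=
          sign_zero_trans (hsign y hy.1 x1 hx1X) (by rw [hx1r, ← heq]; ring)
        linarith
      · exact claim2 y hy.1 hlt
    · intro x hxX hxS y hyS
      have hxr : h x < r := by
        by_contra hcon; exact hxS ⟨hxX, not_lt.1 hcon⟩
      have := sign_pos_trans (hsign y hyS.1 x hxX) (sub_pos.2 (lt_of_lt_of_le hxr hyS.2))
      linarith
  · refine ⟨{x ∈ Xset | r < h x}, ?_, fun x hx => hx.1, ?_, ?_, ?_⟩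
    · have hcl : IsClosed {x ∈ Xset | h x ≤ r} :=
        hcont.preimage_isClosed_of_isClosed hXcomp.isClosed isClosed_Iic
      have heq : {x ∈ Xset | r < h x} = Xset \ {x ∈ Xset | h x ≤ r} := by
        ext x; simp only [mem_setOf_eq, mem_diff]; constructor
        · rintro ⟨hxX, hlt⟩; exact ⟨hxX, fun hcon => absurd hcon.2 (not_le.2 hlt)⟩
        · rintro ⟨hxX, hnot⟩
          refine ⟨hxX, ?_⟩
          by_contra hcon
          exact hnot ⟨hxX, not_lt.1 hcon⟩
      rw [heq]
      exact hXcomp.isClosed.measurableSet.diff hcl.measurableSet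
    · refine lt_of_lt_of_le hvol (measure_mono fun x hx => ⟨hx.1, ?_⟩)
      rcases eq_or_lt_of_le (claim1 x hx) with heq | hlt
      · exact absurd ⟨x, hx.1, heq.symm, hx.2⟩ hcase
      · exact hlt
    · exact fun y hy => claim2 y hy.1 hy.2
    · intro x hxX hxS y hyS
      have hxr : h x ≤ r := by
        by_contra hcon; exact hxS ⟨hxX, not_le.1 hcon⟩
      have := sign_pos_trans (hsign y hyS.1 x hxX) (sub_pos.2 (lt_of_le_of_lt hxr hyS.2))
      linarith

private lemma aux_frac {s a : ℝ≥0∞} (ha0 : a ≠ 0) (hatop : a ≠ ⊤) :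
    a⁻¹ * (a - s) = 1 - a⁻¹ * s := by
  rw [ENNReal.mul_sub (fun _ _ => ENNReal.inv_ne_top.2 ha0),
    ENNReal.inv_mul_cancel ha0 hatop]

private lemma unifOn_compl_le {d : ℕ} {A S Xset : Set (Euc d)} (hSm : MeasurableSet S)
    (hSA : S ⊆ A) (hAX : A ⊆ Xset) (hA : volume A ≠ 0) (hX0 : volume Xset ≠ 0)
    (hXfin : volume Xset ≠ ⊤) :
    unifOn A Sᶜ ≤ (volume Xset)⁻¹ * (volume Xset - volume S) := by
  have hAX' : volume A ≤ volume Xset := measure_mono hAX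
  have hSA' : volume S ≤ volume A := measure_mono hSA
  have hAtop : volume A ≠ ⊤ := (lt_of_le_of_lt hAX' hXfin.lt_top).ne
  have hStop : volume S ≠ ⊤ := (lt_of_le_of_lt hSA' hAtop.lt_top).ne
  have h1 : unifOn A Sᶜ = (volume A)⁻¹ * (volume A - volume S) := by
    rw [unifOn, Measure.smul_apply, Measure.restrict_apply hSm.compl, smul_eq_mul,
      Set.inter_comm, ← Set.diff_eq, measure_diff hSA hSm.nullMeasurableSet hStop]
  rw [h1, aux_frac hA hAtop, aux_frac hX0 hXfin]
  exact tsub_le_tsub_left (mul_le_mul_left (ENNReal.inv_le_inv.2 hAX') _) 1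

private lemma theta_lt_one {d : ℕ} {S Xset : Set (Euc d)}
    (hS : 0 < volume S) (hX0 : volume Xset ≠ 0) (hXfin : volume Xset ≠ ⊤) :
    (volume Xset)⁻¹ * (volume Xset - volume S) < 1 := by
  rw [aux_frac hX0 hXfin]
  exact ENNReal.sub_lt_self ENNReal.one_ne_top one_ne_zero
    (mul_ne_zero (ENNReal.inv_ne_zero.2 hXfin) hS.ne')

private lemma rankopt_bound {d : ℕ} {Ω : Type*} [MeasurableSpace Ω] {P : Measure Ω}
    [IsProbabilityMeasure P] {Xset S : Set (Euc d)} {f : Euc d → ℝ}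
    (hXm : MeasurableSet Xset) (hX0 : volume Xset ≠ 0) (hXfin : volume Xset ≠ ⊤)
    (hSm : MeasurableSet S) (hSX : S ⊆ Xset) (hSpos : 0 < volume S)
    (hsep : ∀ x ∈ Xset, x ∉ S → ∀ y ∈ S, f x < f y)
    {n : ℕ} {X : Fin (n + 1) → Ω → Euc d}
    (hproc : IsRankOptProcess P Xset f (n + 1) X) :
    ∀ t, ∀ htn : t + 1 ≤ n + 1,
      P {ω | ∀ i : Fin (t + 1), X (Fin.castLE htn i) ω ∉ S}
        ≤ ((volume Xset)⁻¹ * (volume Xset - volume S)) ^ (t + 1) := by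
  obtain ⟨hXmeas, hinit, hstep⟩ := hproc
  -- a.e. membership in Xset
  have hmem : ∀ i : Fin (n + 1), ∀ᵐ ω ∂P, X i ω ∈ Xset := by
    rintro ⟨iv, hi⟩
    rw [ae_iff]
    have hXc : unifOn Xset Xsetᶜ = 0 := by
      rw [unifOn, Measure.smul_apply, Measure.restrict_apply hXm.compl,
        Set.compl_inter_self, measure_empty, smul_eq_mul, mul_zero]
    cases iv with
    | zero =>
      have h0 : (0 : ℕ) < n + 1 := n.succ_pos
      show P (X ⟨0, h0⟩ ⁻¹' Xsetᶜ) = 0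
      rw [← Measure.map_apply (hXmeas _) hXm.compl, hinit h0, hXc]
    | succ t =>
      have hlt : t + 1 < n + 1 := hi
      have hW : Measurable fun ω => fun i : Fin (t + 1) => X (Fin.castLE hlt.le i) ω :=
        measurable_pi_lambda _ fun i => hXmeas _
      show P (X ⟨t + 1, hlt⟩ ⁻¹' Xsetᶜ) = 0
      have hkey := setLIntegral_preimage_condDistrib (μ := P)
        (X := fun ω => fun i : Fin (t + 1) => X (Fin.castLE hlt.le i) ω)
        (Y := X ⟨t + 1, hlt⟩) hW (hXmeas _).aemeasurable hXm.compl MeasurableSet.univ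
      rw [Set.preimage_univ, Set.univ_inter, Measure.restrict_univ] at hkey
      rw [← hkey]
      have h0 : ∀ᵐ ω ∂P,
          condDistrib (X ⟨t + 1, hlt⟩)
            (fun ω' => fun i : Fin (t + 1) => X (Fin.castLE hlt.le i) ω') P
            ((fun ω' => fun i : Fin (t + 1) => X (Fin.castLE hlt.le i) ω') ω) Xsetᶜ
            = (0 : ℝ≥0∞) := by
        filter_upwards [hstep t hlt] with ω hA
        obtain ⟨A, hAm, hA0, hsub, hAX, heq⟩ := hA
        have hAe : Xsetᶜ ∩ A = ∅ := by
          ext x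
          simp only [Set.mem_inter_iff, Set.mem_compl_iff, Set.mem_empty_iff_false,
            iff_false, not_and]
          exact fun hx hxA => hx (hAX hxA)
        have : unifOn A Xsetᶜ = 0 := by
          rw [unifOn, Measure.smul_apply, Measure.restrict_apply hXm.compl, hAe,
            measure_empty, smul_eq_mul, mul_zero]
        rw [heq, this]
      rw [lintegral_congr_ae h0, lintegral_zero]
  have hmemall : ∀ᵐ ω ∂P, ∀ i : Fin (n + 1), X i ω ∈ Xset := ae_all_iff.2 hmem
  intro t
  induction t with
  | zero =>
    intro htn
    have h0 : (0 : ℕ) < n + 1 := n.succ_pos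
    have hsub : {ω | ∀ i : Fin 1, X (Fin.castLE htn i) ω ∉ S}
        ⊆ X ⟨0, h0⟩ ⁻¹' Sᶜ := fun ω hω => hω ⟨0, Nat.zero_lt_one⟩
    refine le_trans (measure_mono hsub) ?_
    have hmap : P (X ⟨0, h0⟩ ⁻¹' Sᶜ) = unifOn Xset Sᶜ := by
      rw [← Measure.map_apply (hXmeas _) hSm.compl, hinit h0]
    rw [hmap, pow_one]
    exact unifOn_compl_le hSm hSX (subset_refl Xset) hX0 hX0 hXfin
  | succ t IH =>
    intro htn
    have ht1 : t + 1 ≤ n + 1 := by omega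
    have hlt : t + 1 < n + 1 := by omega
    have hW : Measurable fun ω => fun i : Fin (t + 1) => X (Fin.castLE hlt.le i) ω :=
      measurable_pi_lambda _ fun i => hXmeas _
    have hBm : MeasurableSet {v : Fin (t + 1) → Euc d | ∀ i, v i ∉ S} := by
      have hBeq : {v : Fin (t + 1) → Euc d | ∀ i, v i ∉ S}
          = ⋂ i, (fun v : Fin (t + 1) → Euc d => v i) ⁻¹' Sᶜ := by
        ext v
        simp only [Set.mem_setOf_eq, Set.mem_iInter, Set.mem_preimage, Set.mem_compl_iff]
      rw [hBeq]
      exact MeasurableSet.iInter fun i => measurable_pi_apply i hSm.compl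
    have hset : {ω | ∀ i : Fin (t + 1 + 1), X (Fin.castLE htn i) ω ∉ S}
        = (fun ω => fun i : Fin (t + 1) => X (Fin.castLE hlt.le i) ω) ⁻¹'
            {v : Fin (t + 1) → Euc d | ∀ i, v i ∉ S}
          ∩ X ⟨t + 1, hlt⟩ ⁻¹' Sᶜ := by
      ext ω
      constructor
      · intro hω
        exact ⟨fun i => hω ⟨i.1, by omega⟩, hω ⟨t + 1, by omega⟩⟩
      · rintro ⟨h1, h2⟩ i
        rcases Nat.lt_or_ge i.1 (t + 1) with hi | hi
        · exact h1 ⟨i.1, hi⟩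
        · have hieq : i = ⟨t + 1, by omega⟩ := Fin.ext (show i.1 = t + 1 by omega)
          rw [hieq]; exact h2
    have hkey := setLIntegral_preimage_condDistrib (μ := P)
      (X := fun ω => fun i : Fin (t + 1) => X (Fin.castLE hlt.le i) ω)
      (Y := X ⟨t + 1, hlt⟩) hW (hXmeas _).aemeasurable hSm.compl hBm
    have hbound : ∀ᵐ ω ∂(P.restrict
        ((fun ω => fun i : Fin (t + 1) => X (Fin.castLE hlt.le i) ω) ⁻¹'
          {v : Fin (t + 1) → Euc d | ∀ i, v i ∉ S})),
        condDistrib (X ⟨t + 1, hlt⟩)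
          (fun ω' => fun i : Fin (t + 1) => X (Fin.castLE hlt.le i) ω') P
          ((fun ω' => fun i : Fin (t + 1) => X (Fin.castLE hlt.le i) ω') ω) Sᶜ
          ≤ (volume Xset)⁻¹ * (volume Xset - volume S) := by
      refine (ae_restrict_iff' (hW hBm)).2 ?_
      filter_upwards [hstep t hlt, hmemall] with ω hA hmemω hωB
      obtain ⟨A, hAm, hA0, hsub, hAX, heq⟩ := hA
      have hSA : S ⊆ A := by
        intro y hy
        refine hsub ⟨hSX hy, fun i => ?_⟩
        exact le_of_lt (hsep _ (hmemω _) (hωB i) y hy)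
      have hle := unifOn_compl_le hSm hSA hAX hA0.ne' hX0 hXfin
      rw [← heq] at hle
      exact hle
    calc P {ω | ∀ i : Fin (t + 1 + 1), X (Fin.castLE htn i) ω ∉ S}
        = P ((fun ω => fun i : Fin (t + 1) => X (Fin.castLE hlt.le i) ω) ⁻¹'
              {v : Fin (t + 1) → Euc d | ∀ i, v i ∉ S}
            ∩ X ⟨t + 1, hlt⟩ ⁻¹' Sᶜ) := by rw [hset]
      _ = ∫⁻ ω in (fun ω => fun i : Fin (t + 1) => X (Fin.castLE hlt.le i) ω) ⁻¹'
              {v : Fin (t + 1) → Euc d | ∀ i, v i ∉ S},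
            condDistrib (X ⟨t + 1, hlt⟩)
              (fun ω' => fun i : Fin (t + 1) => X (Fin.castLE hlt.le i) ω') P
              ((fun ω' => fun i : Fin (t + 1) => X (Fin.castLE hlt.le i) ω') ω) Sᶜ ∂P :=
          hkey.symm
      _ ≤ ∫⁻ _ω in (fun ω => fun i : Fin (t + 1) => X (Fin.castLE hlt.le i) ω) ⁻¹'
              {v : Fin (t + 1) → Euc d | ∀ i, v i ∉ S},
            ((volume Xset)⁻¹ * (volume Xset - volume S)) ∂P := lintegral_mono_ae hbound
      _ = ((volume Xset)⁻¹ * (volume Xset - volume S)) *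
            P ((fun ω => fun i : Fin (t + 1) => X (Fin.castLE hlt.le i) ω) ⁻¹'
              {v : Fin (t + 1) → Euc d | ∀ i, v i ∉ S}) := setLIntegral_const _ _
      _ ≤ ((volume Xset)⁻¹ * (volume Xset - volume S)) *
            ((volume Xset)⁻¹ * (volume Xset - volume S)) ^ (t + 1) :=
          mul_le_mul_right (IH ht1) _
      _ = ((volume Xset)⁻¹ * (volume Xset - volume S)) ^ (t + 1 + 1) := by
          ring

end AuxRankOpt

/-- **Consistency of RankOpt** (Corollary 2 of the paper): under the identifiability condition,
the best observed value of a RankOpt-type process converges in probability to the maximum,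
i.e. `P(f(X_în) < max f - ε) → 0` for every `ε > 0`. -/
theorem rankopt_consistency
    {d : ℕ} {Xset : Set (Euc d)} (hXcomp : IsCompact Xset) (hXconv : Convex ℝ Xset)
    (hXint : (interior Xset).Nonempty)
    {f : Euc d → ℝ} (hf : HasContinuousRanking Xset f)
    {xM : Euc d} (hxM : xM ∈ Xset) (hmax : ∀ x ∈ Xset, f x ≤ f xM)
    (hident : ∀ ε : ℝ, 0 < ε → 0 < volume {x ∈ Xset | f xM - ε ≤ f x})
    {Ω : ℕ → Type*} [∀ n, MeasurableSpace (Ω n)] {P : ∀ n, Measure (Ω n)}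
    [∀ n, IsProbabilityMeasure (P n)]
    {X : ∀ n : ℕ, Fin (n + 1) → Ω n → Euc d}
    (hproc : ∀ n, IsRankOptProcess (P n) Xset f (n + 1) (X n)) :
    ∀ ε : ℝ, 0 < ε →
      Filter.Tendsto (fun n => P n {ω | ∀ i : Fin (n + 1), f (X n i ω) < f xM - ε})
        Filter.atTop (nhds 0) := by
  intro ε hε
  obtain ⟨S, hSm, hSX, hSpos, hSc, hsep⟩ := exists_good_S hXcomp hf (hident ε hε)
  have hXm : MeasurableSet Xset := hXcomp.isClosed.measurableSet
  have hXfin : volume Xset ≠ ⊤ := hXcomp.measure_lt_top.ne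
  have hX0 : volume Xset ≠ 0 := by
    have h1 : 0 < volume (interior Xset) := isOpen_interior.measure_pos volume hXint
    exact (lt_of_lt_of_le h1 (measure_mono interior_subset)).ne'
  have hθ1 : (volume Xset)⁻¹ * (volume Xset - volume S) < 1 :=
    theta_lt_one hSpos hX0 hXfin
  have hbd : ∀ n, P n {ω | ∀ i : Fin (n + 1), f (X n i ω) < f xM - ε}
      ≤ ((volume Xset)⁻¹ * (volume Xset - volume S)) ^ (n + 1) := by
    intro n
    refine le_trans (measure_mono ?_)
      (rankopt_bound hXm hX0 hXfin hSm hSX hSpos hsep (hproc n) n le_rfl)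
    intro ω hω i hmem
    have h1 := hSc _ hmem
    have h2 := hω (Fin.castLE le_rfl i)
    linarith
  refine tendsto_of_tendsto_of_tendsto_of_le_of_le tendsto_const_nhds ?_
    (fun n => zero_le) hbd
  exact (ENNReal.tendsto_pow_atTop_nhds_zero_of_lt_one hθ1).comp
    (Filter.tendsto_add_atTop_nat 1)
end
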